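/- arXiv:1501.05531 — 7 statements merged into one kernel-verified Lean document; each statement's English description precedes it below -/
import Mathlib

section
/- Let ξ be an S-valued random variable on a filtered probability space (Ω, 𝒜, ℍ, ℙ̃) with S finite. Suppose E[h(ξ) | ℋ_T] = E[h(ξ) | ℋ_0] a.s. for every function h: S → ℝ. Then ℍ is immersed in ℍ ∨ σ(ξ): for every bounded ℋ_T-measurable ψ and every t ∈ [0,T], E[ψ | ℋ_t ∨ σ(ξ)] = E[ψ | ℋ_t] almost surely. -/
open MeasureTheory ProbabilityTheory

lemma integral_mul_condexp_aux {Ω : Type*} {m m0 : MeasurableSpace Ω}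
    (hm : m ≤ m0) (μ : Measure Ω) [IsProbabilityMeasure μ]
    {g f : Ω → ℝ} (hg : StronglyMeasurable[m] g)
    (hf : Integrable f μ) (hgf : Integrable (fun x => g x * f x) μ) :
    ∫ x, g x * f x ∂μ = ∫ x, g x * (μ[f|m]) x ∂μ := by
  have h1 : ∫ x, (μ[g * f|m]) x ∂μ = ∫ x, (g * f) x ∂μ := integral_condExp hm
  have h2 := condExp_mul_of_stronglyMeasurable_left hg hgf hf
  calc ∫ x, g x * f x ∂μ = ∫ x, (μ[g * f|m]) x ∂μ := h1.symm
    _ = ∫ x, g x * (μ[f|m]) x ∂μ := integral_congr_ae h2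

lemma sup_comap_mem {Ω S : Type*} [Fintype S] {m : MeasurableSpace Ω}
    (ξ : Ω → S) {s : Set Ω} (hs : MeasurableSet[m ⊔ MeasurableSpace.comap ξ ⊤] s) :
    ∃ A : S → Set Ω, (∀ i, MeasurableSet[m] (A i)) ∧ s = ⋃ i, A i ∩ ξ ⁻¹' {i} := by
  classical
  have mem_iff : ∀ (A : S → Set Ω) (ω : Ω), (ω ∈ ⋃ i, A i ∩ ξ ⁻¹' {i}) ↔ ω ∈ A (ξ ω) := by
    intro A ω
    constructor
    · rintro ⟨t, ⟨i, rfl⟩, htω⟩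
      simp only [Set.mem_inter_iff, Set.mem_preimage, Set.mem_singleton_iff] at htω
      obtain ⟨h1, h2⟩ := htω
      subst h2; exact h1
    · intro h; exact Set.mem_iUnion.2 ⟨ξ ω, h, rfl⟩
  let c : MeasurableSpace Ω :=
  { MeasurableSet' := fun s => ∃ A : S → Set Ω, (∀ i, MeasurableSet[m] (A i)) ∧
      s = ⋃ i, A i ∩ ξ ⁻¹' {i}
    measurableSet_empty := ⟨fun _ => ∅, fun _ => MeasurableSet.empty, by simp⟩
    measurableSet_compl := by
      rintro s ⟨A, hA, rfl⟩
      refine ⟨fun i => (A i)ᶜ, fun i => (hA i).compl, ?_⟩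
      ext ω
      rw [Set.mem_compl_iff, mem_iff, mem_iff, Set.mem_compl_iff]
    measurableSet_iUnion := by
      intro f hf
      choose A hA hrep using hf
      refine ⟨fun i => ⋃ n, A n i, fun i => MeasurableSet.iUnion (fun n => hA n i), ?_⟩
      ext ω
      simp only [Set.mem_iUnion, mem_iff]
      constructor
      · rintro ⟨n, hn⟩
        rw [hrep n, mem_iff] at hn
        exact ⟨n, hn⟩
      · rintro ⟨n, hn⟩
        exact ⟨n, by rw [hrep n, mem_iff]; exact hn⟩ }
  have hle : m ⊔ MeasurableSpace.comap ξ ⊤ ≤ c := by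
    refine sup_le ?_ ?_
    · intro s hs
      refine ⟨fun _ => s, fun _ => hs, ?_⟩
      ext ω; rw [mem_iff]
    · rintro s ⟨u, -, rfl⟩
      refine ⟨fun i => if i ∈ u then Set.univ else ∅, fun i => ?_, ?_⟩
      · by_cases h : i ∈ u <;> simp [h]
      · ext ω
        rw [mem_iff, Set.mem_preimage]
        by_cases h : ξ ω ∈ u <;> simp [h]
  exact hle s hs

/-- If an `S`-valued random variable `ξ` (with `S` finite) satisfies
`E[h(ξ) | ℋ_T] = E[h(ξ) | ℋ_0]` a.s. for every `h : S → ℝ`, then `ℍ` is immersed in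
`ℍ ∨ σ(ξ)`: for every bounded `ℋ_T`-measurable `ψ` and every `t ∈ [0,T]`,
`E[ψ | ℋ_t ∨ σ(ξ)] = E[ψ | ℋ_t]` almost surely. -/
theorem immersion_of_initial_cond
    {Ω S : Type*} [Fintype S] {m0 : MeasurableSpace Ω}
    (μ : Measure Ω) [IsProbabilityMeasure μ]
    (ℍ : Filtration ℝ m0) (T : ℝ) (hT : 0 < T)
    (ξ : Ω → S) (hξ : MeasurableSpace.comap ξ ⊤ ≤ m0)
    (hinit : ∀ h : S → ℝ,
      μ[(fun ω => h (ξ ω)) | ℍ T] =ᵐ[μ] μ[(fun ω => h (ξ ω)) | ℍ 0]) :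
    ∀ ψ : Ω → ℝ, Measurable[ℍ T] ψ → (∃ C, ∀ ω, |ψ ω| ≤ C) →
      ∀ t ∈ Set.Icc (0:ℝ) T,
        μ[ψ | (ℍ t : MeasurableSpace Ω) ⊔ MeasurableSpace.comap ξ ⊤] =ᵐ[μ] μ[ψ | ℍ t] := by
  classical
  intro ψ hψm hbdd t ht
  obtain ⟨C, hC⟩ := hbdd
  have hmt : (ℍ t : MeasurableSpace Ω) ≤ m0 := ℍ.le t
  have hmT : (ℍ T : MeasurableSpace Ω) ≤ m0 := ℍ.le T
  have htT : (ℍ t : MeasurableSpace Ω) ≤ ℍ T := ℍ.mono ht.2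
  have h0t : (ℍ 0 : MeasurableSpace Ω) ≤ ℍ t := ℍ.mono ht.1
  have hmsup : (ℍ t : MeasurableSpace Ω) ⊔ MeasurableSpace.comap ξ ⊤ ≤ m0 := sup_le hmt hξ
  have hψsm : StronglyMeasurable[ℍ T] ψ := hψm.stronglyMeasurable
  have hψae : AEStronglyMeasurable ψ μ := (hψsm.mono hmT).aestronglyMeasurable
  have hψb : ∀ᵐ x ∂μ, ‖ψ x‖ ≤ |C| := ae_of_all _ fun x => by
    rw [Real.norm_eq_abs]; exact (hC x).trans (le_abs_self C)
  have hψint : Integrable ψ μ := Integrable.mono' (integrable_const |C|) hψae hψb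
  -- the atoms of σ(ξ)
  set B : S → Set Ω := fun i => ξ ⁻¹' {i} with hBdef
  have hB : ∀ i, MeasurableSet[m0] (B i) := fun i => hξ _ (MeasurableSpace.measurableSet_comap.2 ⟨{i}, trivial, rfl⟩)
  -- key atomwise identity
  have key : ∀ (i : S) (A : Set Ω), MeasurableSet[ℍ t] A →
      ∫ x in A ∩ B i, (μ[ψ|ℍ t]) x ∂μ = ∫ x in A ∩ B i, ψ x ∂μ := by
    intro i A hA
    set f : Ω → ℝ := (B i).indicator (fun _ => (1:ℝ)) with hfdef
    have hfm : Measurable f := measurable_const.indicator (hB i)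
    have hfb : ∀ᵐ x ∂μ, ‖f x‖ ≤ 1 := ae_of_all _ fun x => by
      by_cases h : x ∈ B i <;> simp [hfdef, Set.indicator_apply, h]
    have hfint : Integrable f μ := (integrable_const (1:ℝ)).indicator (hB i)
    have hfeq : f = fun ω => (fun s => if s = i then (1:ℝ) else 0) (ξ ω) := by
      funext ω
      by_cases h : ξ ω = i <;>
        simp [hfdef, hBdef, Set.indicator_apply, Set.mem_preimage, h]
    have hinit' : μ[f|ℍ T] =ᵐ[μ] μ[f|ℍ 0] := by
      rw [hfeq]; exact hinit (fun s => if s = i then (1:ℝ) else 0)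
    have hk : μ[f|ℍ t] =ᵐ[μ] μ[f|ℍ 0] := by
      calc μ[f|ℍ t] =ᵐ[μ] μ[μ[f|ℍ T]|ℍ t] := (condExp_condExp_of_le htT hmT).symm
        _ =ᵐ[μ] μ[μ[f|ℍ 0]|ℍ t] := condExp_congr_ae hinit'
        _ = μ[f|ℍ 0] := condExp_of_stronglyMeasurable hmt
            (stronglyMeasurable_condExp.mono h0t) integrable_condExp
    have hAm0 : MeasurableSet[m0] A := hmt _ hA
    have hAT : MeasurableSet[ℍ T] A := htT _ hA
    have hbridge : ∀ u : Ω → ℝ,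
        ∫ x in A ∩ B i, u x ∂μ = ∫ x, (A.indicator u) x * f x ∂μ := by
      intro u
      rw [← integral_indicator (hAm0.inter (hB i))]
      refine integral_congr_ae (ae_of_all _ fun x => ?_)
      by_cases h1 : x ∈ A <;> by_cases h2 : x ∈ B i <;>
        simp [hfdef, Set.indicator_apply, h1, h2]
    have hswap : ∀ u v : Ω → ℝ,
        ∫ x, (A.indicator u) x * v x ∂μ = ∫ x, (A.indicator v) x * u x ∂μ := by
      intro u v
      refine integral_congr_ae (ae_of_all _ fun x => ?_)
      by_cases h1 : x ∈ A <;> simp [Set.indicator_apply, h1, mul_comm]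
    set k : Ω → ℝ := μ[f|ℍ 0] with hkdef
    set φ : Ω → ℝ := μ[ψ|ℍ t] with hφdef
    -- integrabilities
    have hφind_int : Integrable (A.indicator φ) μ := integrable_condExp.indicator hAm0
    have hkind_int : Integrable (A.indicator k) μ := integrable_condExp.indicator hAm0
    have hψind_int : Integrable (A.indicator ψ) μ := hψint.indicator hAm0
    have int1 : Integrable (fun x => (A.indicator φ) x * f x) μ := by
      have := hφind_int.bdd_mul hfm.aestronglyMeasurable hfb
      simpa [mul_comm] using this
    have int2 : Integrable (fun x => (A.indicator k) x * ψ x) μ := by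
      have := hkind_int.bdd_mul hψae hψb
      simpa [mul_comm] using this
    have int3 : Integrable (fun x => (A.indicator ψ) x * f x) μ := by
      have := hψind_int.bdd_mul hfm.aestronglyMeasurable hfb
      simpa [mul_comm] using this
    calc ∫ x in A ∩ B i, φ x ∂μ
        = ∫ x, (A.indicator φ) x * f x ∂μ := hbridge φ
      _ = ∫ x, (A.indicator φ) x * (μ[f|ℍ t]) x ∂μ :=
          integral_mul_condexp_aux hmt μ (stronglyMeasurable_condExp.indicator hA) hfint int1
      _ = ∫ x, (A.indicator φ) x * k x ∂μ := by
          refine integral_congr_ae ?_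
          filter_upwards [hk] with x hx
          rw [hx]
      _ = ∫ x, (A.indicator k) x * φ x ∂μ := hswap φ k
      _ = ∫ x, (A.indicator k) x * ψ x ∂μ := by
          refine (integral_mul_condexp_aux hmt μ
            ((stronglyMeasurable_condExp.mono h0t).indicator hA) hψint int2).symm
      _ = ∫ x, (A.indicator ψ) x * k x ∂μ := hswap k ψ
      _ = ∫ x, (A.indicator ψ) x * (μ[f|ℍ T]) x ∂μ := by
          refine integral_congr_ae ?_
          filter_upwards [hinit'] with x hx
          rw [hx]
      _ = ∫ x, (A.indicator ψ) x * f x ∂μ :=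
          (integral_mul_condexp_aux hmT μ (hψsm.indicator hAT) hfint int3).symm
      _ = ∫ x in A ∩ B i, ψ x ∂μ := (hbridge ψ).symm
  -- assemble
  have main : μ[ψ|ℍ t] =ᵐ[μ] μ[ψ|(ℍ t : MeasurableSpace Ω) ⊔ MeasurableSpace.comap ξ ⊤] := by
    have hsm : AEStronglyMeasurable[(ℍ t : MeasurableSpace Ω) ⊔ MeasurableSpace.comap ξ ⊤]
        (μ[ψ|ℍ t]) μ :=
      StronglyMeasurable.aestronglyMeasurable (stronglyMeasurable_condExp.mono le_sup_left)
    refine ae_eq_condExp_of_forall_setIntegral_eq hmsup hψint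
      (fun s _ _ => integrable_condExp.integrableOn) (fun s hs _ => ?_)
      hsm
    obtain ⟨A, hA, rfl⟩ := sup_comap_mem ξ hs
    have hmeas : ∀ i, MeasurableSet[m0] (A i ∩ ξ ⁻¹' {i}) :=
      fun i => (hmt _ (hA i)).inter (hB i)
    have hdis : Pairwise (Function.onFun Disjoint fun i => A i ∩ ξ ⁻¹' {i}) := by
      intro i j hij
      refine Set.disjoint_left.2 ?_
      rintro x ⟨-, hx⟩ ⟨-, hx'⟩
      exact hij ((Set.mem_singleton_iff.1 hx).symm.trans (Set.mem_singleton_iff.1 hx'))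
    rw [integral_iUnion hmeas hdis integrable_condExp.integrableOn,
      integral_iUnion hmeas hdis hψint.integrableOn]
    exact tsum_congr fun i => key i (A i) (hA i)
  exact main.symm
end

section
/- Let ℍ and 𝕂 be independent filtrations on a probability space, and ξ an S-valued random variable such that E[h(ξ)|ℋ_T] = E[h(ξ)|ℋ_0] for all h: S → ℝ and 𝕂 is independent of ℍ ∨ σ(ξ). Then ℍ is immersed in ℍ ∨ 𝕂 ∨ σ(ξ): for all bounded ℋ_T-measurable ψ and t ∈ [0,T], E[ψ | ℋ_t ∨ 𝒦_t ∨ σ(ξ)] = E[ψ | ℋ_t] a.s. -/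
open MeasureTheory ProbabilityTheory

section Aux

variable {Ω : Type*} {m0 : MeasurableSpace Ω} {μ : Measure Ω} [IsProbabilityMeasure μ]

/-- pull-out under the integral: `∫ W·f = ∫ W·E[f|m]` for `W` `m`-measurable. -/
lemma integral_mul_eq_integral_mul_condexp {m : MeasurableSpace Ω} (hm : m ≤ m0)
    {W f : Ω → ℝ} (hW : StronglyMeasurable[m] W)
    (hWf : Integrable (W * f) μ) (hf : Integrable f μ) :
    ∫ ω, (W * f) ω ∂μ = ∫ ω, (W * μ[f|m]) ω ∂μ := by
  calc ∫ ω, (W * f) ω ∂μ = ∫ ω, (μ[W * f|m]) ω ∂μ := (integral_condExp hm).symm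
    _ = ∫ ω, (W * μ[f|m]) ω ∂μ :=
      integral_congr_ae (condExp_mul_of_stronglyMeasurable_left hW hWf hf)

end Aux

/-- The join `ℋ_t ∨ 𝒦_t ∨ σ(ξ)`. -/
private abbrev mGdef {Ω S : Type*} (mH mK : MeasurableSpace Ω) (ξ : Ω → S) :
    MeasurableSpace Ω := mH ⊔ mK ⊔ MeasurableSpace.comap ξ ⊤

/-- Let `ℍ` and `𝕂` be filtrations with `𝕂` independent of `ℍ ∨ σ(ξ)`, and let `ξ` be an
`S`-valued random variable (`S` finite) with `E[h(ξ)|ℋ_T] = E[h(ξ)|ℋ_0]` a.s. for all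
`h : S → ℝ`. Then `ℍ` is immersed in `ℍ ∨ 𝕂 ∨ σ(ξ)`: for all bounded `ℋ_T`-measurable `ψ`
and `t ∈ [0,T]`, `E[ψ | ℋ_t ∨ 𝒦_t ∨ σ(ξ)] = E[ψ | ℋ_t]` a.s. -/
theorem immersion_join_independent
    {Ω S : Type*} [Fintype S] {m0 : MeasurableSpace Ω}
    (μ : Measure Ω) [IsProbabilityMeasure μ]
    (ℍ 𝕂 : Filtration ℝ m0) (T : ℝ) (hT : 0 < T)
    (ξ : Ω → S) (hξ : MeasurableSpace.comap ξ ⊤ ≤ m0)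
    -- 𝕂 is independent of ℍ ∨ σ(ξ)
    (hindep : Indep (𝕂 T) ((ℍ T : MeasurableSpace Ω) ⊔ MeasurableSpace.comap ξ ⊤) μ)
    (hinit : ∀ h : S → ℝ,
      μ[(fun ω => h (ξ ω)) | ℍ T] =ᵐ[μ] μ[(fun ω => h (ξ ω)) | ℍ 0]) :
    ∀ ψ : Ω → ℝ, Measurable[ℍ T] ψ → (∃ C, ∀ ω, |ψ ω| ≤ C) →
      ∀ t ∈ Set.Icc (0:ℝ) T,
        μ[ψ | (ℍ t : MeasurableSpace Ω) ⊔ 𝕂 t ⊔ MeasurableSpace.comap ξ ⊤]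
          =ᵐ[μ] μ[ψ | ℍ t] := by
  intro ψ hψm hψbdd t ht
  obtain ⟨C, hC⟩ := hψbdd
  have lH : (ℍ t : MeasurableSpace Ω) ≤ (mGdef (ℍ t) (𝕂 t) ξ) := le_trans le_sup_left le_sup_left
  have lK : (𝕂 t : MeasurableSpace Ω) ≤ (mGdef (ℍ t) (𝕂 t) ξ) := le_trans le_sup_right le_sup_left
  have lX : MeasurableSpace.comap ξ ⊤ ≤ (mGdef (ℍ t) (𝕂 t) ξ) := le_sup_right
  have hmG : (mGdef (ℍ t) (𝕂 t) ξ) ≤ m0 := sup_le (sup_le (ℍ.le t) (𝕂.le t)) hξ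
  have h0t : (ℍ 0 : MeasurableSpace Ω) ≤ ℍ t := ℍ.mono ht.1
  have htT : (ℍ t : MeasurableSpace Ω) ≤ ℍ T := ℍ.mono ht.2
  have hψm0 : Measurable[m0] ψ := hψm.mono (ℍ.le T) le_rfl
  have hψint : Integrable ψ μ :=
    ⟨hψm0.stronglyMeasurable.aestronglyMeasurable,
      HasFiniteIntegral.of_bounded (C := C)
        (Filter.Eventually.of_forall fun ω => by simpa [Real.norm_eq_abs] using hC ω)⟩
  set g : Ω → ℝ := μ[ψ | ℍ t] with hgdef
  have hgm : StronglyMeasurable[ℍ t] g := stronglyMeasurable_condExp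
  have hgint : Integrable g μ := integrable_condExp
  have hgbdd : ∀ᵐ ω ∂μ, |g ω| ≤ (C.toNNReal : ℝ) :=
    ae_bdd_condExp_of_ae_bdd (Filter.Eventually.of_forall fun ω =>
      (hC ω).trans (Real.le_coe_toNNReal C))
  -- the core computation: no `𝕂` part
  have main : ∀ H : Set Ω, MeasurableSet[ℍ t] H → ∀ B : Set S,
      ∫ ω in H ∩ ξ ⁻¹' B, g ω ∂μ = ∫ ω in H ∩ ξ ⁻¹' B, ψ ω ∂μ := by
    intro H hH B
    set χH : Ω → ℝ := Set.indicator H (fun _ => (1:ℝ)) with hχHdef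
    set f : Ω → ℝ := Set.indicator (ξ ⁻¹' B) (fun _ => (1:ℝ)) with hfdef
    have hχm : StronglyMeasurable[ℍ t] χH := stronglyMeasurable_const.indicator hH
    have hχbdd : ∀ ω, ‖χH ω‖ ≤ 1 := by
      intro ω
      by_cases hω : ω ∈ H <;> simp [hχHdef, hω]
    have hBm : MeasurableSet[MeasurableSpace.comap ξ ⊤] (ξ ⁻¹' B) := ⟨B, trivial, rfl⟩
    have hBm0 : MeasurableSet[m0] (ξ ⁻¹' B) := hξ _ hBm
    have hfm0 : StronglyMeasurable[m0] f := stronglyMeasurable_const.indicator hBm0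
    have hfbdd : ∀ ω, ‖f ω‖ ≤ 1 := by
      intro ω
      by_cases hω : ω ∈ ξ ⁻¹' B <;> simp [hfdef, hω]
    have hfint : Integrable f μ :=
      ⟨hfm0.aestronglyMeasurable,
        HasFiniteIntegral.of_bounded (C := 1) (Filter.Eventually.of_forall hfbdd)⟩
    -- rewrite `hinit` for the indicator function of `B`
    have hfinit : μ[f | ℍ T] =ᵐ[μ] μ[f | ℍ 0] := by
      have hfh : f = fun ω => (Set.indicator B fun _ => (1:ℝ)) (ξ ω) := by
        funext ω
        by_cases hω : ξ ω ∈ B <;> simp [hfdef, hω]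
      rw [hfh]
      exact hinit _
    set c : Ω → ℝ := μ[f | ℍ 0] with hcdef
    have hcm : StronglyMeasurable[ℍ 0] c := stronglyMeasurable_condExp
    have hcint : Integrable c μ := integrable_condExp
    have hcbdd : ∀ᵐ ω ∂μ, |c ω| ≤ ((1 : NNReal) : ℝ) :=
      ae_bdd_condExp_of_ae_bdd (R := 1) (Filter.Eventually.of_forall fun ω => by
        simpa [Real.norm_eq_abs] using hfbdd ω)
    -- Step 1: for H_T-measurable bounded X, `∫ X χH f = ∫ X χH c`
    have step1 : ∀ X : Ω → ℝ, StronglyMeasurable[ℍ T] X → Integrable X μ →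
        ∫ ω, X ω * χH ω * f ω ∂μ = ∫ ω, X ω * χH ω * c ω ∂μ := by
      intro X hXm hXint
      set W : Ω → ℝ := fun ω => X ω * χH ω with hWdef
      have hWm : StronglyMeasurable[ℍ T] W := hXm.mul (hχm.mono htT)
      have hWint : Integrable W μ := by
        have := hXint.bdd_mul ((hχm.mono (ℍ.le t)).aestronglyMeasurable) (Filter.Eventually.of_forall hχbdd)
        simpa [hWdef, mul_comm] using this
      have hWf : Integrable (W * f) μ := by
        have h := hWint.bdd_mul hfm0.aestronglyMeasurable (Filter.Eventually.of_forall hfbdd)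
        exact h.congr (Filter.Eventually.of_forall fun ω => mul_comm (f ω) (W ω))
      have e1 : ∫ ω, (W * f) ω ∂μ = ∫ ω, (W * μ[f | ℍ T]) ω ∂μ :=
        integral_mul_eq_integral_mul_condexp (ℍ.le T) hWm hWf hfint
      have e2 : ∫ ω, (W * μ[f | ℍ T]) ω ∂μ = ∫ ω, (W * c) ω ∂μ :=
        integral_congr_ae (hfinit.mono fun ω hω => by simp [hω])
      calc ∫ ω, X ω * χH ω * f ω ∂μ = ∫ ω, (W * f) ω ∂μ := rfl
        _ = ∫ ω, (W * c) ω ∂μ := e1.trans e2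
        _ = ∫ ω, X ω * χH ω * c ω ∂μ := rfl
    -- Step 2: `∫ ψ χH c = ∫ g χH c`
    have step2 : ∫ ω, ψ ω * χH ω * c ω ∂μ = ∫ ω, g ω * χH ω * c ω ∂μ := by
      set Z : Ω → ℝ := fun ω => χH ω * c ω with hZdef
      have hZm : StronglyMeasurable[ℍ t] Z := hχm.mul (hcm.mono h0t)
      have hZint : Integrable Z μ :=
        hcint.bdd_mul ((hχm.mono (ℍ.le t)).aestronglyMeasurable) (Filter.Eventually.of_forall hχbdd)
      have hZψ : Integrable (Z * ψ) μ := by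
        have h := hZint.bdd_mul hψm0.stronglyMeasurable.aestronglyMeasurable
          (c := |C|) (Filter.Eventually.of_forall fun ω => by
            simpa [Real.norm_eq_abs] using (hC ω).trans (le_abs_self C))
        exact h.congr (Filter.Eventually.of_forall fun ω => mul_comm (ψ ω) (Z ω))
      have e : ∫ ω, (Z * ψ) ω ∂μ = ∫ ω, (Z * g) ω ∂μ :=
        integral_mul_eq_integral_mul_condexp (ℍ.le t) hZm hZψ hψint
      calc ∫ ω, ψ ω * χH ω * c ω ∂μ = ∫ ω, (Z * ψ) ω ∂μ :=
            integral_congr_ae (Filter.Eventually.of_forall fun ω => by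
              simp [hZdef]; ring)
        _ = ∫ ω, (Z * g) ω ∂μ := e
        _ = ∫ ω, g ω * χH ω * c ω ∂μ :=
            integral_congr_ae (Filter.Eventually.of_forall fun ω => by
              simp [hZdef]; ring)
    -- assemble
    have hHB0 : MeasurableSet[m0] (H ∩ ξ ⁻¹' B) := (ℍ.le t _ hH).inter hBm0
    have hind : ∀ X : Ω → ℝ,
        ∫ ω in H ∩ ξ ⁻¹' B, X ω ∂μ = ∫ ω, X ω * χH ω * f ω ∂μ := by
      intro X
      rw [← integral_indicator hHB0]
      refine integral_congr_ae (Filter.Eventually.of_forall fun ω => ?_)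
      by_cases h1 : ω ∈ H <;> by_cases h2 : ω ∈ ξ ⁻¹' B <;>
        simp [hχHdef, hfdef, h1, h2, Set.indicator_apply]
    rw [hind g, hind ψ, step1 g (hgm.mono htT) hgint, step1 ψ hψm.stronglyMeasurable hψint]
    · exact step2.symm
  -- with the `𝕂`-part, via independence
  have gen : ∀ H, MeasurableSet[ℍ t] H → ∀ K, MeasurableSet[𝕂 t] K → ∀ B : Set S,
      ∫ ω in H ∩ K ∩ ξ ⁻¹' B, g ω ∂μ = ∫ ω in H ∩ K ∩ ξ ⁻¹' B, ψ ω ∂μ := by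
    intro H hH K hK B
    set A : Set Ω := H ∩ ξ ⁻¹' B with hAdef
    have hBm : MeasurableSet[MeasurableSpace.comap ξ ⊤] (ξ ⁻¹' B) := ⟨B, trivial, rfl⟩
    have l2H : (ℍ T : MeasurableSpace Ω) ≤ (ℍ T : MeasurableSpace Ω) ⊔ MeasurableSpace.comap ξ ⊤ :=
      le_sup_left
    have l2X : MeasurableSpace.comap ξ ⊤ ≤ (ℍ T : MeasurableSpace Ω) ⊔ MeasurableSpace.comap ξ ⊤ :=
      le_sup_right
    have hAm2 : MeasurableSet[(ℍ T : MeasurableSpace Ω) ⊔ MeasurableSpace.comap ξ ⊤] A :=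
      MeasurableSet.inter (l2H _ (htT _ hH)) (l2X _ hBm)
    have hA0 : MeasurableSet[m0] A := (ℍ.le t _ hH).inter (hξ _ hBm)
    have hK0 : MeasurableSet[m0] K := 𝕂.le t _ hK
    set χK : Ω → ℝ := Set.indicator K (fun _ => (1:ℝ)) with hχKdef
    have hχKm : Measurable[𝕂 T] χK :=
      measurable_const.indicator (𝕂.mono ht.2 _ hK)
    have hχKint : Integrable χK μ := (integrable_const (1:ℝ)).indicator hK0
    have hrw : H ∩ K ∩ ξ ⁻¹' B = A ∩ K := by
      ext ω; simp [hAdef]; tauto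
    have key : ∀ X : Ω → ℝ,
        Measurable[(ℍ T : MeasurableSpace Ω) ⊔ MeasurableSpace.comap ξ ⊤] X →
        Integrable X μ →
        ∫ ω in A ∩ K, X ω ∂μ = (∫ ω, χK ω ∂μ) * ∫ ω in A, X ω ∂μ := by
      intro X hXm hXint
      set U : Ω → ℝ := Set.indicator A X with hUdef
      have hUm : Measurable[(ℍ T : MeasurableSpace Ω) ⊔ MeasurableSpace.comap ξ ⊤] U :=
        hXm.indicator hAm2
      have hUint : Integrable U μ := hXint.indicator hA0
      have hIF : IndepFun χK U μ := by
        rw [IndepFun_iff_Indep]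
        exact indep_of_indep_of_le_right
          (indep_of_indep_of_le_left hindep hχKm.comap_le) hUm.comap_le
      have e1 : ∫ ω in A ∩ K, X ω ∂μ = ∫ ω, (χK * U) ω ∂μ := by
        rw [← integral_indicator (hA0.inter hK0)]
        refine integral_congr_ae (Filter.Eventually.of_forall fun ω => ?_)
        by_cases h1 : ω ∈ A <;> by_cases h2 : ω ∈ K <;>
          simp [hχKdef, hUdef, h1, h2, Set.indicator_apply]
      rw [e1, IndepFun.integral_mul_eq_mul_integral hIF hχKint.aestronglyMeasurable hUint.aestronglyMeasurable, ← integral_indicator hA0]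
    rw [hrw, key g ((hgm.mono htT).measurable.mono le_sup_left le_rfl) hgint,
      key ψ (hψm.mono le_sup_left le_rfl) hψint, main H hH B]
  -- the π-system of generators
  set π : Set (Set Ω) := {A | ∃ H K : Set Ω, ∃ B : Set S, MeasurableSet[ℍ t] H ∧
    MeasurableSet[𝕂 t] K ∧ A = H ∩ K ∩ ξ ⁻¹' B} with hπdef
  have hpi : IsPiSystem π := by
    rintro A ⟨H, K, B, hH, hK, rfl⟩ A' ⟨H', K', B', hH', hK', rfl⟩ -
    refine ⟨H ∩ H', K ∩ K', B ∩ B', hH.inter hH', hK.inter hK', ?_⟩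
    ext ω
    simp only [Set.mem_inter_iff, Set.mem_preimage]
    tauto
  have hgen : (mGdef (ℍ t) (𝕂 t) ξ) = MeasurableSpace.generateFrom π := by
    refine le_antisymm (sup_le (sup_le ?_ ?_) ?_) (MeasurableSpace.generateFrom_le ?_)
    · intro s hs
      exact MeasurableSpace.measurableSet_generateFrom
        ⟨s, Set.univ, Set.univ, hs, MeasurableSet.univ, by simp⟩
    · intro s hs
      exact MeasurableSpace.measurableSet_generateFrom
        ⟨Set.univ, s, Set.univ, MeasurableSet.univ, hs, by simp⟩
    · rintro s ⟨B, -, rfl⟩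
      exact MeasurableSpace.measurableSet_generateFrom
        ⟨Set.univ, Set.univ, B, MeasurableSet.univ, MeasurableSet.univ, by simp⟩
    · rintro s ⟨H, K, B, hH, hK, rfl⟩
      exact ((lH _ hH).inter (lK _ hK)).inter (lX _ ⟨B, trivial, rfl⟩)
  -- extend from the π-system to all of (mGdef (ℍ t) (𝕂 t) ξ)
  have hg_eq : ∀ s : Set Ω, MeasurableSet[(mGdef (ℍ t) (𝕂 t) ξ)] s →
      ∫ ω in s, g ω ∂μ = ∫ ω in s, ψ ω ∂μ := by
    intro s hs
    refine MeasurableSpace.induction_on_inter (m := (mGdef (ℍ t) (𝕂 t) ξ))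
      (C := fun s _ => ∫ ω in s, g ω ∂μ = ∫ ω in s, ψ ω ∂μ) hgen hpi ?_ ?_ ?_ ?_ s hs
    · simp
    · rintro A ⟨H, K, B, hH, hK, rfl⟩
      exact gen H hH K hK B
    · intro A hA hAeq
      have hA0 : MeasurableSet[m0] A := hmG _ hA
      have e1 := integral_add_compl hA0 hgint
      have e2 := integral_add_compl hA0 hψint
      have e3 : ∫ ω, g ω ∂μ = ∫ ω, ψ ω ∂μ := integral_condExp (ℍ.le t)
      linarith
    · intro fseq hdisj hmeas heq
      have hm0 : ∀ i, MeasurableSet[m0] (fseq i) := fun i => hmG _ (hmeas i)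
      rw [integral_iUnion hm0 hdisj hgint.integrableOn,
        integral_iUnion hm0 hdisj hψint.integrableOn]
      exact tsum_congr heq
  exact (ae_eq_condExp_of_forall_setIntegral_eq hmG hψint
    (fun s _ _ => hgint.integrableOn) (fun s hs _ => hg_eq s hs)
    ((hgm.mono lH).aestronglyMeasurable)).symm
end

section
/- Let X be an (𝔽,𝔾)-doubly stochastic Markov chain, i.e. ℙ(X_t = y | ℱ_T ∨ 𝒢_s) = ℙ(X_t = y | ℱ_t ∨ σ(X_s)) for all 0 ≤ s ≤ t ≤ T and y ∈ S. Define p_{xy}(s,t) = ℙ(X_t = y, X_s = x | ℱ_t)/ℙ(X_s = x | ℱ_t) on {ℙ(X_s = x | ℱ_t) > 0} and 1_{x=y} otherwise. Then for all 0 ≤ s ≤ t ≤ T and y ∈ S, ℙ(X_t = y | ℱ_T ∨ 𝒢_s) = ∑_{x∈S} 1_{X_s = x} p_{xy}(s,t) almost surely. -/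
open MeasureTheory ProbabilityTheory

variable {Ω : Type*}

/-- The real-valued indicator of the event `{X t = y}`. -/
def ind {d : ℕ} (X : ℝ → Ω → Fin d) (t : ℝ) (y : Fin d) : Ω → ℝ :=
  fun ω => if X t ω = y then 1 else 0

/-- `X` is an `(𝔽,𝔾)`-doubly stochastic Markov chain on `[0,T]`:
`ℙ(X_t = y | ℱ_T ∨ 𝒢_s) = ℙ(X_t = y | ℱ_t ∨ σ(X_s))` for `0 ≤ s ≤ t ≤ T`. -/
def IsDSMC {m0 : MeasurableSpace Ω} (μ : Measure Ω) (ℱ 𝒢 : Filtration ℝ m0) (T : ℝ)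
    {d : ℕ} (X : ℝ → Ω → Fin d) : Prop :=
  ∀ s t : ℝ, 0 ≤ s → s ≤ t → t ≤ T → ∀ y : Fin d,
    μ[ind X t y | (ℱ T : MeasurableSpace Ω) ⊔ 𝒢 s]
      =ᵐ[μ] μ[ind X t y | (ℱ t : MeasurableSpace Ω) ⊔ MeasurableSpace.comap (X s) ⊤]

/-- The conditional transition probability field `p_{xy}(s,t)` of `X`:
`ℙ(X_t = y, X_s = x | ℱ_t)/ℙ(X_s = x | ℱ_t)` on `{ℙ(X_s = x | ℱ_t) > 0}` and
`1_{x = y}` otherwise. -/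
noncomputable def ctf {m0 : MeasurableSpace Ω} (μ : Measure Ω) (ℱ : Filtration ℝ m0)
    {d : ℕ} (X : ℝ → Ω → Fin d) (s t : ℝ) (x y : Fin d) (ω : Ω) : ℝ :=
  if 0 < condExp (ℱ t) μ (ind X s x) ω then
    condExp (ℱ t) μ (fun ω' => ind X t y ω' * ind X s x ω') ω / condExp (ℱ t) μ (ind X s x) ω
  else if x = y then 1 else 0

lemma mem_iUnion_fiber {d : ℕ} (X : Ω → Fin d) (B : Fin d → Set Ω) (ω : Ω) :
    ω ∈ (⋃ x, B x ∩ X ⁻¹' {x}) ↔ ω ∈ B (X ω) := by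
  simp only [Set.mem_iUnion, Set.mem_inter_iff, Set.mem_preimage, Set.mem_singleton_iff]
  exact ⟨fun ⟨x, hx, hXx⟩ => hXx ▸ hx, fun h => ⟨X ω, h, rfl⟩⟩

lemma sup_comap_structure {d : ℕ} (m1 : MeasurableSpace Ω) (X : Ω → Fin d)
    {A : Set Ω} (hA : MeasurableSet[m1 ⊔ MeasurableSpace.comap X ⊤] A) :
    ∃ B : Fin d → Set Ω, (∀ x, MeasurableSet[m1] (B x)) ∧
      A = ⋃ x, B x ∩ X ⁻¹' {x} := by
  let 𝒞 : MeasurableSpace Ω :=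
    { MeasurableSet' := fun A => ∃ B : Fin d → Set Ω, (∀ x, MeasurableSet[m1] (B x)) ∧
        A = ⋃ x, B x ∩ X ⁻¹' {x}
      measurableSet_empty := ⟨fun _ => ∅, fun _ => @MeasurableSet.empty _ m1, by
        ext ω; simp [mem_iUnion_fiber]⟩
      measurableSet_compl := by
        rintro A ⟨B, hB, rfl⟩
        refine ⟨fun x => (B x)ᶜ, fun x => (hB x).compl, ?_⟩
        ext ω
        simp only [Set.mem_compl_iff, mem_iUnion_fiber X B ω,
          mem_iUnion_fiber X (fun x => (B x)ᶜ) ω]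
      measurableSet_iUnion := by
        intro f hf
        choose B hB hfB using hf
        refine ⟨fun x => ⋃ n, B n x, fun x => MeasurableSet.iUnion fun n => hB n x, ?_⟩
        ext ω
        rw [mem_iUnion_fiber]
        simp only [Set.mem_iUnion]
        refine exists_congr fun n => ?_
        rw [hfB n, mem_iUnion_fiber] }
  have h1 : m1 ≤ 𝒞 := by
    intro A hA
    refine ⟨fun _ => A, fun _ => hA, ?_⟩
    ext ω; rw [mem_iUnion_fiber]
  have h2 : MeasurableSpace.comap X ⊤ ≤ 𝒞 := by
    classical
    rintro _ ⟨E, -, rfl⟩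
    refine ⟨fun x => if x ∈ E then Set.univ else ∅, fun x => ?_, ?_⟩
    · by_cases h : x ∈ E <;> simp [h, MeasurableSet.univ, @MeasurableSet.empty _ m1]
    · ext ω
      rw [mem_iUnion_fiber]
      by_cases h : X ω ∈ E <;> simp [h]
  exact (sup_le h1 h2) A hA

/-- If `X` is an `(𝔽,𝔾)`-DSMC, then its conditional transition field `p` satisfies
`ℙ(X_t = y | ℱ_T ∨ 𝒢_s) = ∑_x 1_{X_s = x} p_{xy}(s,t)` a.s. for all `0 ≤ s ≤ t ≤ T`. -/
theorem dsmc_transition_field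
    {m0 : MeasurableSpace Ω} (μ : Measure Ω) [IsProbabilityMeasure μ]
    (ℱ 𝒢 : Filtration ℝ m0) (T : ℝ) (hT : 0 < T) (d : ℕ) (X : ℝ → Ω → Fin d)
    (hadp : ∀ t : ℝ, Measurable[𝒢 t] (X t))
    (hX : IsDSMC μ ℱ 𝒢 T X) :
    ∀ s t : ℝ, 0 ≤ s → s ≤ t → t ≤ T → ∀ y : Fin d,
      μ[ind X t y | (ℱ T : MeasurableSpace Ω) ⊔ 𝒢 s]
        =ᵐ[μ] fun ω => ∑ x : Fin d, ind X s x ω * ctf μ ℱ X s t x y ω := by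
  intro s t hs hst htT y
  classical
  have hXs : Measurable (X s) := (hadp s).mono (𝒢.le s) le_rfl
  have hXt : Measurable (X t) := (hadp t).mono (𝒢.le t) le_rfl
  have hmF : (ℱ t : MeasurableSpace Ω) ≤ m0 := ℱ.le t
  have hcomap_le : MeasurableSpace.comap (X s) ⊤ ≤ m0 := by
    rintro _ ⟨E, -, rfl⟩; exact hXs E.to_countable.measurableSet
  have hm' : (ℱ t : MeasurableSpace Ω) ⊔ MeasurableSpace.comap (X s) ⊤ ≤ m0 :=
    sup_le hmF hcomap_le
  -- measurability & integrability of indicators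
  have hind_meas : ∀ (u : ℝ) (z : Fin d), Measurable (X u) → Measurable (ind X u z) := by
    intro u z hu
    have h : MeasurableSet {ω | X u ω = z} := hu (measurableSet_singleton z)
    exact Measurable.ite h measurable_const measurable_const
  have hbdd : ∀ (u : ℝ) (z : Fin d) (ω : Ω), ‖ind X u z ω‖ ≤ 1 := by
    intro u z ω; unfold ind; split <;> simp
  have hintc : ∀ {f : Ω → ℝ}, Measurable f → (∀ᵐ ω ∂μ, ‖f ω‖ ≤ 1) → Integrable f μ := by
    intro f hf hb
    exact (integrable_const (1 : ℝ)).mono' hf.aestronglyMeasurable hb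
  have hind_int : ∀ (u : ℝ) (z : Fin d), Measurable (X u) → Integrable (ind X u z) μ :=
    fun u z hu => hintc (hind_meas u z hu) (Filter.Eventually.of_forall (hbdd u z))
  have hprod_int : ∀ x : Fin d, Integrable (fun ω => ind X t y ω * ind X s x ω) μ := by
    intro x
    refine hintc ((hind_meas t y hXt).mul (hind_meas s x hXs))
      (Filter.Eventually.of_forall fun ω => ?_)
    rw [norm_mul]
    exact mul_le_one₀ (hbdd t y ω) (norm_nonneg _) (hbdd s x ω)
  -- a.e. facts about the two conditional expectations
  have hF0 : ∀ x : Fin d, 0 ≤ᵐ[μ] μ[ind X s x | ℱ t] := fun x =>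
    condExp_nonneg (Filter.Eventually.of_forall fun ω => by unfold ind; split <;> norm_num)
  have hG0 : ∀ x : Fin d, 0 ≤ᵐ[μ] μ[fun ω => ind X t y ω * ind X s x ω | ℱ t] := fun x =>
    condExp_nonneg (Filter.Eventually.of_forall fun ω => by
      unfold ind
      simp only [Pi.zero_apply]
      exact mul_nonneg (by split <;> norm_num) (by split <;> norm_num))
  have hGF : ∀ x : Fin d, μ[fun ω => ind X t y ω * ind X s x ω | ℱ t]
      ≤ᵐ[μ] μ[ind X s x | ℱ t] := fun x =>
    condExp_mono (hprod_int x) (hind_int s x hXs)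
      (Filter.Eventually.of_forall fun ω => by
        unfold ind; by_cases h1 : X t ω = y <;> by_cases h2 : X s ω = x <;> simp [h1, h2])
  -- key identity : ctf * F =ᵐ G
  have hctf_spec : ∀ x : Fin d, (fun ω => ctf μ ℱ X s t x y ω * (μ[ind X s x | ℱ t]) ω)
      =ᵐ[μ] μ[fun ω => ind X t y ω * ind X s x ω | ℱ t] := by
    intro x
    filter_upwards [hF0 x, hG0 x, hGF x] with ω h1 h2 h3
    simp only [ctf]
    split_ifs with h h'
    · exact div_mul_cancel₀ _ (ne_of_gt h)
    all_goals {
      have hf : (μ[ind X s x | ℱ t]) ω = 0 := le_antisymm (not_lt.mp h) h1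
      have hg : (μ[fun ω => ind X t y ω * ind X s x ω | ℱ t]) ω = 0 :=
        le_antisymm (h3.trans_eq hf) h2
      rw [hf, mul_zero, hg] }
  -- ctf is bounded by 1 a.e.
  have hctf_bd : ∀ x : Fin d, ∀ᵐ ω ∂μ, ‖ctf μ ℱ X s t x y ω‖ ≤ 1 := by
    intro x
    filter_upwards [hF0 x, hG0 x, hGF x] with ω h1 h2 h3
    simp only [ctf]
    split_ifs with h h'
    · rw [Real.norm_eq_abs, abs_of_nonneg (div_nonneg h2 h1)]
      exact (div_le_one h).mpr h3
    · simp
    · simp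
  -- ctf is ℱ t-measurable
  have hctf_meas : ∀ x : Fin d, Measurable[ℱ t] (ctf μ ℱ X s t x y) := by
    intro x
    have hFm : Measurable[ℱ t] (μ[ind X s x | ℱ t]) := stronglyMeasurable_condExp.measurable
    have hGm : Measurable[ℱ t] (μ[fun ω => ind X t y ω * ind X s x ω | ℱ t]) :=
      stronglyMeasurable_condExp.measurable
    unfold ctf
    exact Measurable.ite (measurableSet_lt measurable_const hFm) (hGm.div hFm) measurable_const
  -- ind X s x is comap-measurable
  have hXsc : @Measurable Ω (Fin d) (MeasurableSpace.comap (X s) ⊤) _ (X s) :=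
    fun A _ => ⟨A, trivial, rfl⟩
  have hind_m' : ∀ x : Fin d,
      Measurable[MeasurableSpace.comap (X s) ⊤] (ind X s x) := by
    intro x
    have : ind X s x = (fun v : Fin d => if v = x then (1 : ℝ) else 0) ∘ X s := rfl
    rw [this]
    exact (measurable_of_countable _).comp hXsc
  -- the candidate function
  have hRHS_meas : Measurable[(ℱ t : MeasurableSpace Ω) ⊔ MeasurableSpace.comap (X s) ⊤]
      (fun ω => ∑ x : Fin d, ind X s x ω * ctf μ ℱ X s t x y ω) := by
    refine Finset.measurable_sum _ fun x _ => Measurable.mul ?_ ?_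
    · exact (hind_m' x).mono le_sup_right le_rfl
    · exact (hctf_meas x).mono le_sup_left le_rfl
  have hRHS_int : Integrable (fun ω => ∑ x : Fin d, ind X s x ω * ctf μ ℱ X s t x y ω) μ := by
    have hb : ∀ᵐ ω ∂μ, ∀ x : Fin d, ‖ctf μ ℱ X s t x y ω‖ ≤ 1 := ae_all_iff.mpr hctf_bd
    refine (integrable_const (d : ℝ)).mono'
      ((hRHS_meas.mono hm' le_rfl)).aestronglyMeasurable ?_
    filter_upwards [hb] with ω hω
    calc ‖∑ x : Fin d, ind X s x ω * ctf μ ℱ X s t x y ω‖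
        ≤ ∑ x : Fin d, ‖ind X s x ω * ctf μ ℱ X s t x y ω‖ := norm_sum_le _ _
      _ ≤ ∑ _x : Fin d, (1 : ℝ) := Finset.sum_le_sum fun x _ => by
          rw [norm_mul]
          exact mul_le_one₀ (hbdd s x ω) (norm_nonneg _) (hω x)
      _ = d := by simp
  -- set-integral identity on all sets of ℱ t ⊔ σ(X s)
  have hsetint : ∀ A : Set Ω,
      MeasurableSet[(ℱ t : MeasurableSpace Ω) ⊔ MeasurableSpace.comap (X s) ⊤] A →
      ∫ ω in A, (∑ x : Fin d, ind X s x ω * ctf μ ℱ X s t x y ω) ∂μ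
        = ∫ ω in A, ind X t y ω ∂μ := by
    intro A hA
    obtain ⟨B, hB, rfl⟩ := sup_comap_structure (ℱ t) (X s) hA
    have hBm0 : ∀ x : Fin d, MeasurableSet (B x ∩ X s ⁻¹' {x}) := fun x =>
      (hmF _ (hB x)).inter (hXs (measurableSet_singleton x))
    have hdisj : Pairwise (Function.onFun Disjoint fun x => B x ∩ X s ⁻¹' {x}) := by
      intro i j hij
      refine Set.disjoint_left.mpr ?_
      rintro ω ⟨-, h1⟩ ⟨-, h2⟩
      exact hij ((Set.mem_singleton_iff.mp h1).symm.trans (Set.mem_singleton_iff.mp h2))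
    rw [integral_iUnion hBm0 hdisj hRHS_int.integrableOn,
        integral_iUnion hBm0 hdisj (hind_int t y hXt).integrableOn,
        tsum_fintype, tsum_fintype]
    refine Finset.sum_congr rfl fun x _ => ?_
    have hfib : MeasurableSet (X s ⁻¹' {x} : Set Ω) := hXs (measurableSet_singleton x)
    have hconv : ∀ f : Ω → ℝ, ∫ ω in B x ∩ X s ⁻¹' {x}, f ω ∂μ
        = ∫ ω in B x, ind X s x ω * f ω ∂μ := by
      intro f
      rw [← setIntegral_indicator hfib]
      have : (X s ⁻¹' {x}).indicator f = fun ω => ind X s x ω * f ω := by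
        funext ω
        by_cases h : X s ω = x <;> simp [Set.indicator_apply, ind, h]
      rw [this]
    rw [hconv, hconv]
    have hpt : (fun ω => ind X s x ω * ∑ x' : Fin d, ind X s x' ω * ctf μ ℱ X s t x' y ω)
        = fun ω => ind X s x ω * ctf μ ℱ X s t x y ω := by
      funext ω
      unfold ind
      by_cases h : X s ω = x
      · simp [h, ite_mul]
      · simp [h]
    rw [show (∫ ω in B x, ind X s x ω *
          ∑ x' : Fin d, ind X s x' ω * ctf μ ℱ X s t x' y ω ∂μ)
        = ∫ ω in B x, ind X s x ω * ctf μ ℱ X s t x y ω ∂μ by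
      exact congrArg (fun f : Ω → ℝ => ∫ ω in B x, f ω ∂μ) hpt]
    -- integrability of ind * ctf
    have hm_int : Integrable (fun ω => ind X s x ω * ctf μ ℱ X s t x y ω) μ := by
      refine hintc ((hind_meas s x hXs).mul ((hctf_meas x).mono hmF le_rfl)) ?_
      filter_upwards [hctf_bd x] with ω hω
      rw [norm_mul]
      exact mul_le_one₀ (hbdd s x ω) (norm_nonneg _) hω
    have hm_int2 : Integrable (ctf μ ℱ X s t x y * ind X s x) μ := by
      have : (ctf μ ℱ X s t x y * ind X s x)
          = fun ω => ind X s x ω * ctf μ ℱ X s t x y ω := by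
        funext ω; exact mul_comm _ _
      rw [this]; exact hm_int
    have hpull := condExp_mul_of_stronglyMeasurable_left ((hctf_meas x).stronglyMeasurable)
      hm_int2 (hind_int s x hXs)
    have h1 : μ[fun ω => ind X s x ω * ctf μ ℱ X s t x y ω | ℱ t]
        =ᵐ[μ] μ[fun ω => ind X t y ω * ind X s x ω | ℱ t] := by
      have heq : (fun ω => ind X s x ω * ctf μ ℱ X s t x y ω)
          = ctf μ ℱ X s t x y * ind X s x := by
        funext ω; exact mul_comm _ _
      rw [heq]
      exact hpull.trans (hctf_spec x)
    calc ∫ ω in B x, ind X s x ω * ctf μ ℱ X s t x y ω ∂μ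
        = ∫ ω in B x, (μ[fun ω' => ind X s x ω' * ctf μ ℱ X s t x y ω' | ℱ t]) ω ∂μ :=
          (setIntegral_condExp hmF hm_int (hB x)).symm
      _ = ∫ ω in B x, (μ[fun ω' => ind X t y ω' * ind X s x ω' | ℱ t]) ω ∂μ :=
          setIntegral_congr_ae (hmF _ (hB x)) (h1.mono fun ω hω _ => hω)
      _ = ∫ ω in B x, ind X t y ω * ind X s x ω ∂μ :=
          setIntegral_condExp hmF (hprod_int x) (hB x)
      _ = ∫ ω in B x, ind X s x ω * ind X t y ω ∂μ := by
          simp_rw [mul_comm (ind X t y _) (ind X s _ _)]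
  -- conclude by uniqueness of conditional expectation
  have hRHS_eq : (fun ω => ∑ x : Fin d, ind X s x ω * ctf μ ℱ X s t x y ω)
      =ᵐ[μ] μ[ind X t y | (ℱ t : MeasurableSpace Ω) ⊔ MeasurableSpace.comap (X s) ⊤] :=
    ae_eq_condExp_of_forall_setIntegral_eq hm' (hind_int t y hXt)
      (fun A _ _ => hRHS_int.integrableOn)
      (fun A hA _ => hsetint A hA)
      (hRHS_meas.stronglyMeasurable.aestronglyMeasurable)
  exact (hX s t hs hst htT y).trans hRHS_eq.symm
end

section
/- Conversely, suppose X is S-valued 𝔾-adapted càdlàg, and there exists a stochastic-matrix-valued random field P̃(s,t) such that P̃(s,·) is 𝔽-adapted on [s,T] and ℙ(X_t = y | ℱ_T ∨ 𝒢_s) = ∑_{x∈S} 1_{X_s = x} p̃_{xy}(s,t) a.s. for all s ≤ t and y ∈ S. Then X is an (𝔽,𝔾)-DSMC, i.e. ℙ(X_t = y | ℱ_T ∨ 𝒢_s) = ℙ(X_t = y | ℱ_t ∨ σ(X_s)) a.s. -/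
open MeasureTheory ProbabilityTheory

variable {Ω : Type*}

/-- Conversely: if there is a stochastic-matrix-valued random field `p̃(s,t)` with
`p̃(s,t)` `ℱ_t`-measurable for `s ≤ t`, such that
`ℙ(X_t = y | ℱ_T ∨ 𝒢_s) = ∑_x 1_{X_s = x} p̃_{xy}(s,t)` a.s., then `X` is an
`(𝔽,𝔾)`-DSMC. -/
theorem dsmc_of_transition_field
    {m0 : MeasurableSpace Ω} (μ : Measure Ω) [IsProbabilityMeasure μ]
    (ℱ 𝒢 : Filtration ℝ m0) (T : ℝ) (hT : 0 < T) (d : ℕ) (X : ℝ → Ω → Fin d)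
    (hadp : ∀ t : ℝ, Measurable[𝒢 t] (X t))
    (p : ℝ → ℝ → Fin d → Fin d → Ω → ℝ)
    -- p̃(s,t) is a stochastic matrix
    (hpos : ∀ s t x y, 0 ≤ s → s ≤ t → t ≤ T → ∀ ω, 0 ≤ p s t x y ω)
    (hrow : ∀ s t x, 0 ≤ s → s ≤ t → t ≤ T → ∀ ω, ∑ y : Fin d, p s t x y ω = 1)
    -- p̃(s,·) is 𝔽-adapted on [s,T]
    (hmeas : ∀ s t x y, 0 ≤ s → s ≤ t → t ≤ T → Measurable[ℱ t] (p s t x y))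
    -- the conditional transition identity
    (hfield : ∀ s t : ℝ, 0 ≤ s → s ≤ t → t ≤ T → ∀ y : Fin d,
      μ[ind X t y | (ℱ T : MeasurableSpace Ω) ⊔ 𝒢 s]
        =ᵐ[μ] fun ω => ∑ x : Fin d, ind X s x ω * p s t x y ω) :
    IsDSMC μ ℱ 𝒢 T X := by
  intro s t hs hst htT y
  set m' : MeasurableSpace Ω := (ℱ t : MeasurableSpace Ω) ⊔ MeasurableSpace.comap (X s) ⊤
    with hm'def
  set m : MeasurableSpace Ω := (ℱ T : MeasurableSpace Ω) ⊔ 𝒢 s with hmdef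
  have hcomap : MeasurableSpace.comap (X s) ⊤ ≤ 𝒢 s := by
    rintro A ⟨u, -, rfl⟩
    have : X s ⁻¹' u = ⋃ x ∈ u, X s ⁻¹' {x} := by
      ext ω; simp
    rw [this]
    exact MeasurableSet.biUnion u.to_countable fun x _ =>
      (hadp s) (MeasurableSet.singleton x)
  have hm'm : m' ≤ m := sup_le ((ℱ.mono htT).trans le_sup_left)
    (hcomap.trans le_sup_right)
  have hm : m ≤ m0 := sup_le (ℱ.le T) (𝒢.le s)
  have hm' : m' ≤ m0 := hm'm.trans hm
  set f : Ω → ℝ := fun ω => ∑ x : Fin d, ind X s x ω * p s t x y ω with hfdef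
  have hfield' := hfield s t hs hst htT y
  have hfmeas : StronglyMeasurable[m'] f := by
    apply Measurable.stronglyMeasurable
    apply Finset.measurable_sum
    intro x _
    have h1 : Measurable[m'] (ind X s x) := by
      have hset : MeasurableSet[m'] {ω | X s ω = x} := by
        apply le_sup_right (α := MeasurableSpace Ω)
        exact ⟨{x}, trivial, rfl⟩
      exact Measurable.ite hset measurable_const measurable_const
    have h2 : Measurable[m'] (p s t x y) :=
      (hmeas s t x y hs hst htT).mono le_sup_left le_rfl
    exact h1.mul h2
  have hfint : Integrable f μ := integrable_condExp.congr hfield'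
  have key : μ[ind X t y | m'] =ᵐ[μ] f := by
    calc μ[ind X t y | m']
        =ᵐ[μ] μ[μ[ind X t y | m] | m'] := (condExp_condExp_of_le hm'm hm).symm
      _ =ᵐ[μ] μ[f | m'] := condExp_congr_ae hfield'
      _ = f := condExp_of_stronglyMeasurable hm' hfmeas hfint
  exact hfield'.trans key.symm
end

section
/- If X is an (𝔽,𝔾)-DSMC with c-transition field P, then for 0 = t_0 ≤ t_1 ≤ … ≤ t_n ≤ T and x_1,…,x_n ∈ S: ℙ(X_{t_1} = x_1, …, X_{t_n} = x_n | ℱ_T) = ∑_{x_0∈S} ℙ(X_0 = x_0 | ℱ_T) ∏_{k=0}^{n-1} p_{x_k x_{k+1}}(t_k, t_{k+1}) almost surely. -/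
open MeasureTheory ProbabilityTheory

variable {Ω : Type*}

section aux
variable {m0 : MeasurableSpace Ω} {μ : Measure Ω} [IsProbabilityMeasure μ]
  {d : ℕ} {X : ℝ → Ω → Fin d} {ℱ : Filtration ℝ m0}

lemma ind_nonneg (t : ℝ) (y : Fin d) (ω : Ω) : 0 ≤ ind X t y ω := by
  unfold ind; positivity

lemma ind_le_one (t : ℝ) (y : Fin d) (ω : Ω) : ind X t y ω ≤ 1 := by
  unfold ind; split <;> norm_num

lemma abs_ind_le_one (t : ℝ) (y : Fin d) (ω : Ω) : |ind X t y ω| ≤ 1 := by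
  rw [abs_of_nonneg (ind_nonneg t y ω)]; exact ind_le_one t y ω

lemma measurable_ind {m : MeasurableSpace Ω} {t : ℝ} (h : Measurable[m] (X t)) (y : Fin d) :
    Measurable[m] (ind X t y) :=
  Measurable.ite (h (measurableSet_singleton y)) measurable_const measurable_const

lemma measurable_ind_comap (s : ℝ) (x : Fin d) :
    Measurable[MeasurableSpace.comap (X s) ⊤] (ind X s x) :=
  Measurable.ite ⟨{x}, trivial, rfl⟩ measurable_const measurable_const

lemma sum_ind (t : ℝ) (ω : Ω) : ∑ x : Fin d, ind X t x ω = 1 := by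
  simp [ind]

lemma integrable_of_bounded_meas {f : Ω → ℝ} (hf : AEStronglyMeasurable f μ) {C : ℝ}
    (h : ∀ᵐ ω ∂μ, |f ω| ≤ C) : Integrable f μ :=
  ⟨hf, HasFiniteIntegral.of_bounded h⟩

lemma integrable_ind {t : ℝ} (h : Measurable (X t)) (y : Fin d) : Integrable (ind X t y) μ :=
  integrable_of_bounded_meas (measurable_ind h y).aestronglyMeasurable
    (Filter.Eventually.of_forall (abs_ind_le_one t y))

lemma integrable_ind_mul_ind {s t : ℝ} (hs : Measurable (X s)) (ht : Measurable (X t))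
    (x y : Fin d) : Integrable (fun ω => ind X t y ω * ind X s x ω) μ := by
  refine integrable_of_bounded_meas
    ((measurable_ind ht y).mul (measurable_ind hs x)).aestronglyMeasurable
    (Filter.Eventually.of_forall (fun ω => ?_)) (C := 1)
  rw [abs_mul]
  calc |ind X t y ω| * |ind X s x ω| ≤ 1 * 1 :=
        mul_le_mul (abs_ind_le_one t y ω) (abs_ind_le_one s x ω) (abs_nonneg _) zero_le_one
    _ = 1 := one_mul 1

lemma ctf_stronglyMeasurable (s t : ℝ) (x y : Fin d) :
    StronglyMeasurable[ℱ t] (ctf μ ℱ X s t x y) := by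
  refine Measurable.stronglyMeasurable ?_
  refine Measurable.ite (measurableSet_lt measurable_const
    stronglyMeasurable_condExp.measurable) ?_ measurable_const
  exact stronglyMeasurable_condExp.measurable.div stronglyMeasurable_condExp.measurable

lemma ctf_bound {s t : ℝ} (hs : Measurable (X s)) (ht : Measurable (X t)) (x y : Fin d) :
    ∀ᵐ ω ∂μ, 0 ≤ ctf μ ℱ X s t x y ω ∧ ctf μ ℱ X s t x y ω ≤ 1 := by
  have h1 : 0 ≤ᵐ[μ] condExp (ℱ t) μ (fun ω' => ind X t y ω' * ind X s x ω') :=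
    condExp_nonneg (Filter.Eventually.of_forall fun ω =>
      mul_nonneg (ind_nonneg t y ω) (ind_nonneg s x ω))
  have h2 : condExp (ℱ t) μ (fun ω' => ind X t y ω' * ind X s x ω')
      ≤ᵐ[μ] condExp (ℱ t) μ (ind X s x) :=
    condExp_mono (integrable_ind_mul_ind hs ht x y) (integrable_ind hs x)
      (Filter.Eventually.of_forall fun ω =>
        mul_le_of_le_one_left (ind_nonneg s x ω) (ind_le_one t y ω))
  filter_upwards [h1, h2] with ω h1 h2
  unfold ctf
  split_ifs with hpos hxy
  · exact ⟨div_nonneg h1 hpos.le, div_le_one_of_le₀ h2 hpos.le⟩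
  · norm_num
  · norm_num

lemma abs_ctf_le_one {s t : ℝ} (hs : Measurable (X s)) (ht : Measurable (X t)) (x y : Fin d) :
    ∀ᵐ ω ∂μ, |ctf μ ℱ X s t x y ω| ≤ 1 := by
  filter_upwards [ctf_bound hs ht x y (μ := μ)] with ω h
  rw [abs_of_nonneg h.1]; exact h.2

lemma integrable_ctf {s t : ℝ} (hs : Measurable (X s)) (ht : Measurable (X t)) (x y : Fin d) :
    Integrable (ctf μ ℱ X s t x y) μ :=
  integrable_of_bounded_meas
    ((ctf_stronglyMeasurable s t x y).mono (ℱ.le t)).aestronglyMeasurable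
    (abs_ctf_le_one hs ht x y)

lemma ctf_mul_condexp {s t : ℝ} (hs : Measurable (X s)) (ht : Measurable (X t)) (x y : Fin d) :
    (fun ω => ctf μ ℱ X s t x y ω * condExp (ℱ t) μ (ind X s x) ω)
      =ᵐ[μ] condExp (ℱ t) μ (fun ω' => ind X t y ω' * ind X s x ω') := by
  have h1 : 0 ≤ᵐ[μ] condExp (ℱ t) μ (fun ω' => ind X t y ω' * ind X s x ω') :=
    condExp_nonneg (Filter.Eventually.of_forall fun ω =>
      mul_nonneg (ind_nonneg t y ω) (ind_nonneg s x ω))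
  have h2 : condExp (ℱ t) μ (fun ω' => ind X t y ω' * ind X s x ω')
      ≤ᵐ[μ] condExp (ℱ t) μ (ind X s x) :=
    condExp_mono (integrable_ind_mul_ind hs ht x y) (integrable_ind hs x)
      (Filter.Eventually.of_forall fun ω =>
        mul_le_of_le_one_left (ind_nonneg s x ω) (ind_le_one t y ω))
  have h3 : 0 ≤ᵐ[μ] condExp (ℱ t) μ (ind X s x) :=
    condExp_nonneg (Filter.Eventually.of_forall (ind_nonneg s x))
  filter_upwards [h1, h2, h3] with ω h1 h2 h3
  unfold ctf
  by_cases hpos : 0 < condExp (ℱ t) μ (ind X s x) ω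
  · rw [if_pos hpos]; field_simp
  · rw [if_neg hpos]
    have hg0 : condExp (ℱ t) μ (ind X s x) ω = 0 := le_antisymm (not_lt.1 hpos) h3
    have h4 : condExp (ℱ t) μ (fun ω' => ind X t y ω' * ind X s x ω') ω = 0 :=
      le_antisymm (h2.trans_eq hg0) h1
    rw [hg0, mul_zero, h4]

def partMS (m₁ : MeasurableSpace Ω) {δ : Type*} (f : Ω → δ) : MeasurableSpace Ω where
  MeasurableSet' S := ∀ x : δ, ∃ A, MeasurableSet[m₁] A ∧ S ∩ f ⁻¹' {x} = A ∩ f ⁻¹' {x}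
  measurableSet_empty := fun x => ⟨∅, MeasurableSet.empty, by simp⟩
  measurableSet_compl := by
    rintro S hS x
    obtain ⟨A, hA, hAS⟩ := hS x
    refine ⟨Aᶜ, hA.compl, ?_⟩
    ext ω
    have h1 : ω ∈ S ∩ f ⁻¹' {x} ↔ ω ∈ A ∩ f ⁻¹' {x} := by rw [hAS]
    simp only [Set.mem_inter_iff, Set.mem_compl_iff, Set.mem_preimage,
      Set.mem_singleton_iff] at h1 ⊢
    constructor
    · rintro ⟨hS', hfx⟩
      exact ⟨fun hA' => hS' ((h1.2 ⟨hA', hfx⟩).1), hfx⟩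
    · rintro ⟨hA', hfx⟩
      exact ⟨fun hS' => hA' ((h1.1 ⟨hS', hfx⟩).1), hfx⟩
  measurableSet_iUnion := by
    intro g hg x
    choose A hA hAS using fun i => hg i x
    refine ⟨⋃ i, A i, MeasurableSet.iUnion hA, ?_⟩
    rw [Set.iUnion_inter, Set.iUnion_inter]
    exact Set.iUnion_congr hAS

lemma join_sets (m₁ : MeasurableSpace Ω) {δ : Type*} (f : Ω → δ) {S : Set Ω}
    (hS : MeasurableSet[m₁ ⊔ MeasurableSpace.comap f ⊤] S) (x : δ) :
    ∃ A, MeasurableSet[m₁] A ∧ S ∩ f ⁻¹' {x} = A ∩ f ⁻¹' {x} := by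
  have h1 : m₁ ≤ partMS m₁ f := fun S hS x => ⟨S, hS, rfl⟩
  have h2 : MeasurableSpace.comap f ⊤ ≤ partMS m₁ f := by
    rintro S ⟨B, -, rfl⟩ x
    by_cases hx : x ∈ B
    · refine ⟨Set.univ, MeasurableSet.univ, ?_⟩
      ext ω
      simp only [Set.mem_inter_iff, Set.mem_preimage, Set.mem_singleton_iff, Set.univ_inter,
        Set.mem_univ, true_and]
      exact ⟨fun h => h.2, fun h => ⟨by rw [h]; exact hx, h⟩⟩
    · refine ⟨∅, MeasurableSet.empty, ?_⟩
      ext ω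
      simp only [Set.mem_inter_iff, Set.mem_preimage, Set.mem_singleton_iff, Set.empty_inter,
        Set.mem_empty_iff_false, false_and, iff_false, not_and]
      intro hB h; rw [h] at hB; exact hx hB
  exact sup_le h1 h2 S hS x

lemma integrable_mul_ctf {s t : ℝ} (hs : Measurable (X s)) (ht : Measurable (X t))
    {f : Ω → ℝ} (hf : Measurable f) (hb : ∀ ω, |f ω| ≤ 1) (x y : Fin d) :
    Integrable (fun ω => f ω * ctf μ ℱ X s t x y ω) μ := by
  refine integrable_of_bounded_meas
    (hf.mul ((ctf_stronglyMeasurable s t x y).mono (ℱ.le t)).measurable).aestronglyMeasurable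
    ?_ (C := 1)
  filter_upwards [abs_ctf_le_one hs ht x y (μ := μ)] with ω hc
  rw [abs_mul]
  calc |f ω| * |ctf μ ℱ X s t x y ω| ≤ 1 * 1 :=
        mul_le_mul (hb ω) hc (abs_nonneg _) zero_le_one
    _ = 1 := one_mul 1

lemma condexp_join {𝒢 : Filtration ℝ m0} (hadp : ∀ r : ℝ, Measurable[𝒢 r] (X r))
    (s t : ℝ) (y : Fin d) :
    μ[ind X t y | (ℱ t : MeasurableSpace Ω) ⊔ MeasurableSpace.comap (X s) ⊤]
      =ᵐ[μ] fun ω => ∑ x : Fin d, ind X s x ω * ctf μ ℱ X s t x y ω := by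
  have hs : Measurable (X s) := (hadp s).mono (𝒢.le s) le_rfl
  have ht : Measurable (X t) := (hadp t).mono (𝒢.le t) le_rfl
  have hm : (ℱ t : MeasurableSpace Ω) ⊔ MeasurableSpace.comap (X s) ⊤ ≤ m0 := by
    refine sup_le (ℱ.le t) ?_
    rintro S ⟨B, -, rfl⟩
    exact hs (B.toFinite.measurableSet)
  have hint : ∀ x : Fin d, Integrable (fun ω => ind X s x ω * ctf μ ℱ X s t x y ω) μ :=
    fun x => integrable_mul_ctf hs ht (measurable_ind hs x) (abs_ind_le_one s x) x y
  have hg_int : Integrable (fun ω => ∑ x : Fin d, ind X s x ω * ctf μ ℱ X s t x y ω) μ :=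
    integrable_finset_sum _ (fun x _ => hint x)
  refine (ae_eq_condExp_of_forall_setIntegral_eq hm (integrable_ind ht y)
    (fun S _ _ => hg_int.integrableOn) (fun S hS _ => ?_) ?_).symm
  swap
  · refine StronglyMeasurable.aestronglyMeasurable (Measurable.stronglyMeasurable ?_)
    refine Finset.measurable_sum _ (fun x _ => Measurable.mul ?_ ?_)
    · exact (measurable_ind_comap s x).mono le_sup_right le_rfl
    · exact (ctf_stronglyMeasurable s t x y).measurable.mono le_sup_left le_rfl
  -- the set-integral computation
  have hSm0 : MeasurableSet S := hm S hS
  have key : ∀ x : Fin d,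
      ∫ ω in S, ind X s x ω * ctf μ ℱ X s t x y ω ∂μ
        = ∫ ω in S, ind X t y ω * ind X s x ω ∂μ := by
    intro x
    obtain ⟨A, hA, hAS⟩ := join_sets (ℱ t) (X s) hS x
    have hAm0 : MeasurableSet A := ℱ.le t A hA
    have hpre : MeasurableSet (X s ⁻¹' {x}) := hs (measurableSet_singleton x)
    have hind_eq : (fun ω => ind X s x ω * ctf μ ℱ X s t x y ω)
        = Set.indicator (X s ⁻¹' {x}) (ctf μ ℱ X s t x y) := by
      funext ω
      by_cases h : X s ω = x
      · simp [ind, h, Set.indicator_of_mem, Set.mem_preimage]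
      · simp [ind, h, Set.indicator_of_notMem, Set.mem_preimage]
    have hind_eq2 : (fun ω => ind X t y ω * ind X s x ω)
        = Set.indicator (X s ⁻¹' {x}) (ind X t y) := by
      funext ω
      by_cases h : X s ω = x
      · simp [ind, h, Set.indicator_of_mem, Set.mem_preimage]
      · simp [ind, h, Set.indicator_of_notMem, Set.mem_preimage]
    have hctf_ind : Integrable (ctf μ ℱ X s t x y * ind X s x) μ := by
      have := integrable_mul_ctf hs ht (measurable_ind hs x) (abs_ind_le_one s x) x y (ℱ := ℱ) (μ := μ)
      refine this.congr (Filter.Eventually.of_forall fun ω => ?_)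
      simp [Pi.mul_apply, mul_comm]
    have hmul := condExp_mul_of_stronglyMeasurable_left (ctf_stronglyMeasurable s t x y (μ := μ))
      hctf_ind (integrable_ind hs x)
    calc ∫ ω in S, ind X s x ω * ctf μ ℱ X s t x y ω ∂μ
        = ∫ ω in S ∩ X s ⁻¹' {x}, ctf μ ℱ X s t x y ω ∂μ := by
          rw [hind_eq, setIntegral_indicator hpre]
      _ = ∫ ω in A ∩ X s ⁻¹' {x}, ctf μ ℱ X s t x y ω ∂μ := by rw [hAS]
      _ = ∫ ω in A, ind X s x ω * ctf μ ℱ X s t x y ω ∂μ := by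
          rw [hind_eq, setIntegral_indicator hpre]
      _ = ∫ ω in A, (ctf μ ℱ X s t x y * ind X s x) ω ∂μ := by
          refine setIntegral_congr_ae hAm0 (Filter.Eventually.of_forall fun ω _ => ?_)
          simp [Pi.mul_apply, mul_comm]
      _ = ∫ ω in A, (μ[ctf μ ℱ X s t x y * ind X s x|(ℱ t : MeasurableSpace Ω)]) ω ∂μ :=
          (setIntegral_condExp (ℱ.le t) hctf_ind hA).symm
      _ = ∫ ω in A, ctf μ ℱ X s t x y ω * (μ[ind X s x|(ℱ t : MeasurableSpace Ω)]) ω ∂μ := by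
          refine integral_congr_ae (Filter.EventuallyEq.restrict ?_)
          filter_upwards [hmul] with ω hω using hω
      _ = ∫ ω in A, (μ[fun ω' => ind X t y ω' * ind X s x ω'|(ℱ t : MeasurableSpace Ω)]) ω ∂μ := by
          refine integral_congr_ae (Filter.EventuallyEq.restrict ?_)
          filter_upwards [ctf_mul_condexp hs ht x y (ℱ := ℱ)] with ω hω using hω
      _ = ∫ ω in A, ind X t y ω * ind X s x ω ∂μ :=
          setIntegral_condExp (ℱ.le t) (integrable_ind_mul_ind hs ht x y) hA
      _ = ∫ ω in A ∩ X s ⁻¹' {x}, ind X t y ω ∂μ := by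
          rw [hind_eq2, setIntegral_indicator hpre]
      _ = ∫ ω in S ∩ X s ⁻¹' {x}, ind X t y ω ∂μ := by rw [hAS]
      _ = ∫ ω in S, ind X t y ω * ind X s x ω ∂μ := by
          rw [hind_eq2, setIntegral_indicator hpre]
  calc ∫ ω in S, ∑ x : Fin d, ind X s x ω * ctf μ ℱ X s t x y ω ∂μ
      = ∑ x : Fin d, ∫ ω in S, ind X s x ω * ctf μ ℱ X s t x y ω ∂μ :=
        integral_finset_sum _ (fun x _ => (hint x).integrableOn)
    _ = ∑ x : Fin d, ∫ ω in S, ind X t y ω * ind X s x ω ∂μ := by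
        exact Finset.sum_congr rfl (fun x _ => key x)
    _ = ∫ ω in S, ∑ x : Fin d, ind X t y ω * ind X s x ω ∂μ :=
        (integral_finset_sum _ (fun x _ => (integrable_ind_mul_ind hs ht x y).integrableOn)).symm
    _ = ∫ ω in S, ind X t y ω ∂μ := by
        refine setIntegral_congr_ae hSm0 (Filter.Eventually.of_forall fun ω _ => ?_)
        rw [← Finset.mul_sum, sum_ind, mul_one]
lemma condexp_ind_abs_le_one {m : MeasurableSpace Ω} (hm : m ≤ m0) {t : ℝ}
    (ht : Measurable[m0] (X t)) (y : Fin d) :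
    ∀ᵐ ω ∂μ, |(μ[ind X t y|m]) ω| ≤ 1 := by
  have h0 : 0 ≤ᵐ[μ] μ[ind X t y|m] :=
    condExp_nonneg (Filter.Eventually.of_forall (ind_nonneg t y))
  have h1 : μ[ind X t y|m] ≤ᵐ[μ] μ[(fun _ => (1:ℝ))|m] :=
    condExp_mono (integrable_ind (μ := μ) ht y) (integrable_const 1)
      (Filter.Eventually.of_forall (ind_le_one t y))
  have hc : μ[(fun _ => (1:ℝ))|m] = fun _ => 1 := condExp_const hm 1
  rw [hc] at h1
  filter_upwards [h0, h1] with ω h0 h1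
  rw [abs_le]
  exact ⟨by simpa using (neg_nonpos.2 zero_le_one).trans h0, h1⟩
end aux

lemma key_lemma {m0 : MeasurableSpace Ω} (μ : Measure Ω) [IsProbabilityMeasure μ]
    (ℱ 𝒢 : Filtration ℝ m0) (T : ℝ) {d : ℕ} {X : ℝ → Ω → Fin d}
    (hadp : ∀ r : ℝ, Measurable[𝒢 r] (X r)) (hX : IsDSMC μ ℱ 𝒢 T X)
    (t : ℕ → ℝ) (ht0 : t 0 = 0) (u : ℕ → Fin d) :
    ∀ n : ℕ, (∀ k < n, t k ≤ t (k + 1)) → t n ≤ T →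
    μ[(fun ω => ∏ k ∈ Finset.range (n + 1), ind X (t k) (u k) ω)|(ℱ T : MeasurableSpace Ω)]
      =ᵐ[μ] fun ω => (μ[ind X 0 (u 0)|(ℱ T : MeasurableSpace Ω)]) ω *
        ∏ k ∈ Finset.range n, ctf μ ℱ X (t k) (t (k + 1)) (u k) (u (k + 1)) ω := by
  intro n
  induction n with
  | zero =>
    intro _ _
    have heq : (fun ω => ∏ k ∈ Finset.range (0 + 1), ind X (t k) (u k) ω)
        = ind X 0 (u 0) := by
      funext ω; rw [Finset.prod_range_one, ht0]
    rw [heq]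
    simp only [Finset.range_zero, Finset.prod_empty, mul_one]
    exact Filter.Eventually.of_forall (fun ω => rfl)
  | succ n ih =>
    intro hmono hT'
    have hmeasX : ∀ r : ℝ, Measurable[m0] (X r) := fun r => (hadp r).mono (𝒢.le r) le_rfl
    have tmono : ∀ j ≤ n + 1, ∀ i ≤ j, t i ≤ t j := by
      intro j hj
      induction j with
      | zero => intro i hi; interval_cases i; exact le_rfl
      | succ m ihm =>
        intro i hi
        rcases Nat.lt_succ_iff_lt_or_eq.1 (Nat.lt_succ_of_le hi) with h | h
        · exact (ihm (by omega) i (by omega)).trans (hmono m (by omega))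
        · exact h ▸ le_rfl
    have ht_nonneg : 0 ≤ t n := ht0 ▸ tmono n (by omega) 0 (Nat.zero_le n) |>.trans_eq rfl
    have htn_le : t n ≤ t (n + 1) := hmono n (by omega)
    have htn_T : t n ≤ T := htn_le.trans hT'
    set F : Ω → ℝ := fun ω => ∏ k ∈ Finset.range (n + 1), ind X (t k) (u k) ω with hF
    set h : Ω → ℝ := ind X (t (n + 1)) (u (n + 1)) with hh
    set c : Ω → ℝ := ctf μ ℱ X (t n) (t (n + 1)) (u n) (u (n + 1)) with hc
    set m' : MeasurableSpace Ω := (ℱ T : MeasurableSpace Ω) ⊔ 𝒢 (t n) with hm'def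
    have hm' : m' ≤ m0 := sup_le (ℱ.le T) (𝒢.le _)
    -- boundedness and measurability of F
    have hFabs : ∀ ω, |F ω| ≤ 1 := by
      intro ω
      have h0 : 0 ≤ F ω := Finset.prod_nonneg fun k _ => ind_nonneg _ _ _
      have h1 : F ω ≤ 1 :=
        Finset.prod_le_one (fun k _ => ind_nonneg _ _ _) (fun k _ => ind_le_one _ _ _)
      rw [abs_of_nonneg h0]; exact h1
    have hFmeas' : Measurable[m'] F := by
      refine Finset.measurable_prod _ (fun k hk => measurable_ind ?_ _)
      have hk' : k ≤ n := Nat.lt_succ_iff.1 (Finset.mem_range.1 hk)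
      exact (hadp (t k)).mono
        ((𝒢.mono (tmono n (by omega) k hk')).trans le_sup_right) le_rfl
    have hFmeas : Measurable[m0] F := hFmeas'.mono hm' le_rfl
    have hFint : Integrable F μ :=
      integrable_of_bounded_meas hFmeas.aestronglyMeasurable
        (Filter.Eventually.of_forall hFabs)
    have hFh_int : Integrable (fun ω => F ω * h ω) μ := by
      refine integrable_of_bounded_meas
        (hFmeas.mul (measurable_ind (hmeasX _) _)).aestronglyMeasurable
        (Filter.Eventually.of_forall fun ω => ?_) (C := 1)
      rw [abs_mul]
      calc |F ω| * |h ω| ≤ 1 * 1 :=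
            mul_le_mul (hFabs ω) (abs_ind_le_one _ _ ω) (abs_nonneg _) zero_le_one
        _ = 1 := one_mul 1
    have hh_int : Integrable h μ := integrable_ind (hmeasX _) _
    -- step 1+2: tower and pull-out
    have step1 : μ[(fun ω => F ω * h ω)|(ℱ T : MeasurableSpace Ω)]
        =ᵐ[μ] μ[μ[(fun ω => F ω * h ω)|m']|(ℱ T : MeasurableSpace Ω)] :=
      (condExp_condExp_of_le le_sup_left hm').symm
    have step2 : μ[(fun ω => F ω * h ω)|m'] =ᵐ[μ] fun ω => F ω * (μ[h|m']) ω := by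
      have := condExp_mul_of_stronglyMeasurable_left (hFmeas'.stronglyMeasurable) hFh_int hh_int
      filter_upwards [this] with ω hω using hω
    have step3 : μ[h|m'] =ᵐ[μ] μ[h|(ℱ (t (n + 1)) : MeasurableSpace Ω) ⊔
        MeasurableSpace.comap (X (t n)) ⊤] :=
      hX (t n) (t (n + 1)) ht_nonneg htn_le hT' (u (n + 1))
    have step4 : μ[h|(ℱ (t (n + 1)) : MeasurableSpace Ω) ⊔
        MeasurableSpace.comap (X (t n)) ⊤]
        =ᵐ[μ] fun ω => ∑ x : Fin d, ind X (t n) x ω *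
          ctf μ ℱ X (t n) (t (n + 1)) x (u (n + 1)) ω :=
      condexp_join hadp (t n) (t (n + 1)) (u (n + 1))
    have step5 : ∀ ω, F ω * (∑ x : Fin d, ind X (t n) x ω *
        ctf μ ℱ X (t n) (t (n + 1)) x (u (n + 1)) ω) = F ω * c ω := by
      intro ω
      by_cases hω : X (t n) ω = u n
      · congr 1
        rw [Finset.sum_eq_single (u n)]
        · simp [ind, hω, hc]
        · intro b _ hb
          simp [ind, hω, hb.symm]
        · intro hb; exact absurd (Finset.mem_univ _) hb
      · have hF0 : F ω = 0 := by
          refine Finset.prod_eq_zero (Finset.self_mem_range_succ n) ?_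
          simp [ind, hω]
        rw [hF0, zero_mul, zero_mul]
    -- combine: μ[F*h|ℱT] = μ[F*c|ℱT]
    have combined : μ[(fun ω => F ω * h ω)|(ℱ T : MeasurableSpace Ω)]
        =ᵐ[μ] μ[(fun ω => F ω * c ω)|(ℱ T : MeasurableSpace Ω)] := by
      refine step1.trans (condExp_congr_ae ?_)
      refine step2.trans ?_
      filter_upwards [step3, step4] with ω h3 h4
      rw [h3, h4, step5 ω]
    -- pull out c
    have hc_meas : StronglyMeasurable[(ℱ T : MeasurableSpace Ω)] c :=
      (ctf_stronglyMeasurable (t n) (t (n + 1)) (u n) (u (n + 1))).mono (ℱ.mono hT')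
    have hcF_int : Integrable (c * F) μ := by
      have := integrable_mul_ctf (μ := μ) (ℱ := ℱ) (hmeasX (t n)) (hmeasX (t (n + 1)))
        hFmeas hFabs (u n) (u (n + 1))
      refine this.congr (Filter.Eventually.of_forall fun ω => ?_)
      simp [Pi.mul_apply, hc, mul_comm]
    have step6 : μ[(fun ω => F ω * c ω)|(ℱ T : MeasurableSpace Ω)]
        =ᵐ[μ] fun ω => c ω * (μ[F|(ℱ T : MeasurableSpace Ω)]) ω := by
      have h1 : (fun ω => F ω * c ω) = c * F := by
        funext ω; simp [Pi.mul_apply, mul_comm]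
      rw [h1]
      have := condExp_mul_of_stronglyMeasurable_left hc_meas hcF_int hFint
      filter_upwards [this] with ω hω using hω
    -- apply IH
    have ihh := ih (fun k hk => hmono k (by omega)) htn_T
    have final : μ[(fun ω => F ω * h ω)|(ℱ T : MeasurableSpace Ω)]
        =ᵐ[μ] fun ω => (μ[ind X 0 (u 0)|(ℱ T : MeasurableSpace Ω)]) ω *
          ∏ k ∈ Finset.range (n + 1), ctf μ ℱ X (t k) (t (k + 1)) (u k) (u (k + 1)) ω := by
      refine (combined.trans step6).trans ?_
      filter_upwards [ihh] with ω hω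
      rw [hω, Finset.prod_range_succ]
      ring
    refine Filter.EventuallyEq.trans ?_ final
    refine condExp_congr_ae (Filter.Eventually.of_forall fun ω => ?_)
    show (∏ k ∈ Finset.range (n + 1 + 1), ind X (t k) (u k) ω) = F ω * h ω
    rw [Finset.prod_range_succ]



/-- Conditional finite-dimensional distributions of a DSMC: for a grid
`0 = t_0 ≤ t_1 ≤ … ≤ t_n ≤ T` and states `x_1, …, x_n`,
`ℙ(X_{t_1} = x_1, …, X_{t_n} = x_n | ℱ_T)
  = ∑_{x_0} ℙ(X_0 = x_0 | ℱ_T) ∏_{k=0}^{n-1} p_{x_k x_{k+1}}(t_k, t_{k+1})` a.s. -/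
theorem dsmc_finite_dimensional_distributions
    {m0 : MeasurableSpace Ω} (μ : Measure Ω) [IsProbabilityMeasure μ]
    (ℱ 𝒢 : Filtration ℝ m0) (T : ℝ) (hT : 0 < T) (d : ℕ) (X : ℝ → Ω → Fin d)
    (hadp : ∀ t : ℝ, Measurable[𝒢 t] (X t))
    (hX : IsDSMC μ ℱ 𝒢 T X)
    (n : ℕ) (t : ℕ → ℝ) (x : ℕ → Fin d)
    (ht0 : t 0 = 0) (hmono : ∀ k < n, t k ≤ t (k + 1)) (htn : t n ≤ T) :
    μ[(fun ω => ∏ k ∈ Finset.Icc 1 n, ind X (t k) (x k) ω) | ℱ T]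
      =ᵐ[μ] fun ω => ∑ x0 : Fin d,
        condExp (ℱ T) μ (ind X 0 x0) ω *
          ∏ k ∈ Finset.range n,
            ctf μ ℱ X (t k) (t (k + 1))
              (Function.update x 0 x0 k) (Function.update x 0 x0 (k + 1)) ω := by
  have hmeasX : ∀ r : ℝ, Measurable[m0] (X r) := fun r => (hadp r).mono (𝒢.le r) le_rfl
  set G : Fin d → Ω → ℝ := fun x0 ω =>
    ∏ k ∈ Finset.range (n + 1), ind X (t k) (Function.update x 0 x0 k) ω with hGdef
  have hG_eq : ∀ x0 ω, G x0 ω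
      = (∏ k ∈ Finset.Icc 1 n, ind X (t k) (x k) ω) * ind X 0 x0 ω := by
    intro x0 ω
    show (∏ k ∈ Finset.range (n + 1), ind X (t k) (Function.update x 0 x0 k) ω) = _
    rw [Finset.prod_range_succ']
    congr 1
    · -- ∏ i in range n, ind X (t (i+1)) (update x 0 x0 (i+1)) ω = ∏ Icc 1 n ...
      have h1 : Finset.Icc 1 n = Finset.Ico 1 (n + 1) := (Finset.Ico_add_one_right_eq_Icc 1 n).symm
      rw [h1, Finset.prod_Ico_eq_prod_range]
      refine Finset.prod_congr rfl (fun i _ => ?_)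
      rw [Function.update_of_ne (by omega : i + 1 ≠ 0)]
      rw [Nat.add_comm 1 i]
    · rw [Function.update_self, ht0]
  have hsum : (fun ω => ∏ k ∈ Finset.Icc 1 n, ind X (t k) (x k) ω)
      = fun ω => ∑ x0 : Fin d, G x0 ω := by
    funext ω
    have : ∑ x0 : Fin d, G x0 ω
        = ∑ x0 : Fin d, (∏ k ∈ Finset.Icc 1 n, ind X (t k) (x k) ω) * ind X 0 x0 ω :=
      Finset.sum_congr rfl (fun x0 _ => hG_eq x0 ω)
    rw [this, ← Finset.mul_sum, sum_ind, mul_one]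
  have hGint : ∀ x0, Integrable (G x0) μ := by
    intro x0
    refine integrable_of_bounded_meas ?_ (Filter.Eventually.of_forall (fun ω => ?_)) (C := 1)
    · exact (Finset.measurable_prod _ (fun k _ =>
        measurable_ind (hmeasX (t k)) _)).aestronglyMeasurable
    · have h0 : 0 ≤ G x0 ω := Finset.prod_nonneg fun k _ => ind_nonneg _ _ _
      have h1 : G x0 ω ≤ 1 :=
        Finset.prod_le_one (fun k _ => ind_nonneg _ _ _) (fun k _ => ind_le_one _ _ _)
      rw [abs_of_nonneg h0]; exact h1
  have hfun : (fun ω => ∑ x0 : Fin d, G x0 ω) = ∑ x0 : Fin d, G x0 := by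
    funext ω; simp [Finset.sum_apply]
  have hkey : ∀ x0 : Fin d,
      μ[G x0|(ℱ T : MeasurableSpace Ω)]
        =ᵐ[μ] fun ω => (μ[ind X 0 (Function.update x 0 x0 0)|(ℱ T : MeasurableSpace Ω)]) ω *
          ∏ k ∈ Finset.range n, ctf μ ℱ X (t k) (t (k + 1))
            (Function.update x 0 x0 k) (Function.update x 0 x0 (k + 1)) ω :=
    fun x0 => key_lemma μ ℱ 𝒢 T hadp hX t ht0 (Function.update x 0 x0) n hmono htn
  rw [hsum, hfun]
  have hce := condExp_finsetSum (s := (Finset.univ : Finset (Fin d)))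
    (fun x0 _ => hGint x0) (m := (ℱ T : MeasurableSpace Ω))
  refine hce.trans ?_
  have hall : ∀ᵐ ω ∂μ, ∀ x0 : Fin d, (μ[G x0|(ℱ T : MeasurableSpace Ω)]) ω
      = (μ[ind X 0 (Function.update x 0 x0 0)|(ℱ T : MeasurableSpace Ω)]) ω *
        ∏ k ∈ Finset.range n, ctf μ ℱ X (t k) (t (k + 1))
          (Function.update x 0 x0 k) (Function.update x 0 x0 (k + 1)) ω :=
    ae_all_iff.2 (fun x0 => hkey x0)
  filter_upwards [hall] with ω hω
  rw [Finset.sum_apply]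
  refine Finset.sum_congr rfl (fun x0 _ => ?_)
  rw [hω x0, Function.update_self]
end

section
/- Let X be an (𝔽,𝔾)-DSMC whose initial state satisfies ℙ(X_0 = x | ℱ_T) = ℙ(X_0 = x | ℱ_0) for all x ∈ S. Then for all 0 ≤ t_1 ≤ … ≤ t_n ≤ t ≤ T and x_1,…,x_n ∈ S: ℙ(X_{t_1}=x_1,…,X_{t_n}=x_n | ℱ_T) = ℙ(X_{t_1}=x_1,…,X_{t_n}=x_n | ℱ_t). Consequently, 𝔽 is ℙ-immersed in 𝔽 ∨ 𝔽^X. -/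
open MeasureTheory ProbabilityTheory MeasurableSpace Set
open scoped Classical

variable {Ω : Type*}

noncomputable section
namespace DSMC

variable {m0 : MeasurableSpace Ω} {μ : Measure Ω} {d : ℕ}

/-- set-valued indicator -/
def indS (X : ℝ → Ω → Fin d) (r : ℝ) (u : Set (Fin d)) : Ω → ℝ :=
  fun ω => if X r ω ∈ u then 1 else 0

lemma indS_nonneg (X : ℝ → Ω → Fin d) (r u) (ω : Ω) : 0 ≤ indS X r u ω := by
  unfold indS; split <;> norm_num

lemma indS_le_one (X : ℝ → Ω → Fin d) (r u) (ω : Ω) : indS X r u ω ≤ 1 := by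
  unfold indS; split <;> norm_num

lemma abs_indS_le_one (X : ℝ → Ω → Fin d) (r u) (ω : Ω) : |indS X r u ω| ≤ 1 := by
  rw [abs_le]; exact ⟨by linarith [indS_nonneg X r u ω], indS_le_one X r u ω⟩

lemma indS_eq_indicator (X : ℝ → Ω → Fin d) (r u) :
    indS X r u = (X r ⁻¹' u).indicator (fun _ => (1:ℝ)) := by
  funext ω; simp [indS, Set.indicator_apply, Set.mem_preimage]

lemma stronglyMeasurable_indS {m : MeasurableSpace Ω} {X : ℝ → Ω → Fin d} {r : ℝ}
    (hX : Measurable[m] (X r)) (u : Set (Fin d)) : StronglyMeasurable[m] (indS X r u) := by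
  rw [indS_eq_indicator]
  exact stronglyMeasurable_const.indicator (hX (u.toFinite.measurableSet))

lemma comap_top_le {m : MeasurableSpace Ω} {Y : Ω → Fin d} (hY : Measurable[m] Y) :
    MeasurableSpace.comap Y ⊤ ≤ m := by
  rintro s ⟨u, -, rfl⟩
  exact hY (u.toFinite.measurableSet)

lemma integrable_of_bdd [IsFiniteMeasure μ] {f : Ω → ℝ} {C : ℝ}
    (hf : AEStronglyMeasurable f μ) (h : ∀ ω, |f ω| ≤ C) : Integrable f μ :=
  (integrable_const C).mono' hf (ae_of_all _ (by simpa [Real.norm_eq_abs] using h))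

lemma compl_step {s : Set Ω} (hs : MeasurableSet s) {F G : Ω → ℝ}
    (hF : Integrable F μ) (hG : Integrable G μ)
    (huniv : ∫ ω, F ω ∂μ = ∫ ω, G ω ∂μ)
    (h : ∫ ω in s, F ω ∂μ = ∫ ω in s, G ω ∂μ) :
    ∫ ω in sᶜ, F ω ∂μ = ∫ ω in sᶜ, G ω ∂μ := by
  have h1 := integral_add_compl hs hF
  have h2 := integral_add_compl hs hG
  linarith

lemma union_step {f : ℕ → Set Ω} (hdisj : Pairwise (Function.onFun Disjoint f))
    (hmeas : ∀ i, MeasurableSet (f i)) {F G : Ω → ℝ}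
    (hF : Integrable F μ) (hG : Integrable G μ)
    (h : ∀ i, ∫ ω in f i, F ω ∂μ = ∫ ω in f i, G ω ∂μ) :
    ∫ ω in ⋃ i, f i, F ω ∂μ = ∫ ω in ⋃ i, f i, G ω ∂μ := by
  have h1 := hasSum_integral_iUnion hmeas hdisj hF.integrableOn
  have h2 := hasSum_integral_iUnion hmeas hdisj hG.integrableOn
  rw [funext h] at h1
  exact h1.unique h2

/-- Extension of set-integral equality from a π-system to the generated σ-algebra. -/
lemma setIntegral_eq_of_piSystem [IsFiniteMeasure μ] {m' : MeasurableSpace Ω}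
    {P : Set (Set Ω)} (hgen : m' = MeasurableSpace.generateFrom P) (hPi : IsPiSystem P)
    (hm' : m' ≤ m0) {F G : Ω → ℝ} (hF : Integrable F μ) (hG : Integrable G μ)
    (huniv : ∫ ω, F ω ∂μ = ∫ ω, G ω ∂μ)
    (hbasic : ∀ A ∈ P, ∫ ω in A, F ω ∂μ = ∫ ω in A, G ω ∂μ) :
    ∀ A, MeasurableSet[m'] A → ∫ ω in A, F ω ∂μ = ∫ ω in A, G ω ∂μ := by
  intro A hA
  refine MeasurableSpace.induction_on_inter
    (C := fun s _ => ∫ ω in s, F ω ∂μ = ∫ ω in s, G ω ∂μ) hgen hPi (by simp) (fun t ht => hbasic t ht)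
    (fun s hs h => compl_step (hm' s hs) hF hG huniv h)
    (fun f hdisj hmeas h => union_step hdisj (fun i => hm' _ (hmeas i)) hF hG h) A hA

lemma condExp_sup_comap {W : Type*} {m : MeasurableSpace W} {mW : MeasurableSpace W}
    {ν : Measure W} [IsProbabilityMeasure ν] {e : ℕ} (hm : m ≤ mW)
    {Y : W → Fin e} (hY : Measurable[mW] Y) {f : W → ℝ} (hfm : Measurable[mW] f)
    (hf0 : ∀ ω, 0 ≤ f ω) (hf1 : ∀ ω, f ω ≤ 1) :
    ∃ q : Fin e → W → ℝ, (∀ x, StronglyMeasurable[m] (q x)) ∧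
      (∀ x ω, 0 ≤ q x ω ∧ q x ω ≤ 1) ∧
      ν[f | m ⊔ MeasurableSpace.comap Y ⊤]
        =ᵐ[ν] fun ω => ∑ x, (if Y ω = x then 1 else 0) * q x ω := by
  classical
  set iY : Fin e → W → ℝ := fun x ω => if Y ω = x then 1 else 0 with hiY_def
  have hiY_sm : ∀ x, StronglyMeasurable[MeasurableSpace.comap Y ⊤] (iY x) := by
    intro x
    have : iY x = (Y ⁻¹' {x}).indicator (fun _ => (1:ℝ)) := by
      funext ω; simp [hiY_def, Set.indicator_apply]
    rw [this]
    exact stronglyMeasurable_const.indicator ⟨{x}, trivial, rfl⟩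
  have hiY_m0 : ∀ x, AEStronglyMeasurable (iY x) ν := by
    intro x
    exact ((hiY_sm x).mono (comap_top_le hY)).aestronglyMeasurable
  have hiY_bd : ∀ x ω, |iY x ω| ≤ 1 := by
    intro x ω; simp only [hiY_def]; split <;> norm_num
  have hiY_nn : ∀ x ω, 0 ≤ iY x ω := by
    intro x ω; simp only [hiY_def]; split <;> norm_num
  have hiY_int : ∀ x, Integrable (iY x) ν := fun x => integrable_of_bdd (hiY_m0 x) (hiY_bd x)
  have hf_bd : ∀ ω, |f ω| ≤ 1 := fun ω => abs_le.2 ⟨by linarith [hf0 ω], hf1 ω⟩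
  have hf_int : Integrable f ν := integrable_of_bdd hfm.aestronglyMeasurable hf_bd
  have hfiY_int : ∀ x, Integrable (fun ω => f ω * iY x ω) ν := by
    intro x
    refine integrable_of_bdd (hfm.aestronglyMeasurable.mul (hiY_m0 x)) (C := 1) ?_
    intro ω
    rw [abs_mul]
    calc |f ω| * |iY x ω| ≤ 1 * 1 :=
      mul_le_mul (hf_bd ω) (hiY_bd x ω) (abs_nonneg _) zero_le_one
    _ = 1 := by ring
  set h : Fin e → W → ℝ := fun x => ν[iY x | m] with hh_def
  set g : Fin e → W → ℝ := fun x => ν[fun ω => f ω * iY x ω | m] with hg_def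
  set q : Fin e → W → ℝ :=
    fun x ω => max 0 (min 1 (if 0 < h x ω then g x ω / h x ω else 0)) with hq_def
  have hh_sm : ∀ x, StronglyMeasurable[m] (h x) := fun x => stronglyMeasurable_condExp
  have hg_sm : ∀ x, StronglyMeasurable[m] (g x) := fun x => stronglyMeasurable_condExp
  have hq_sm : ∀ x, StronglyMeasurable[m] (q x) := by
    intro x
    apply Measurable.stronglyMeasurable
    apply measurable_const.max
    apply measurable_const.min
    apply Measurable.ite _ ((hg_sm x).measurable.div (hh_sm x).measurable) measurable_const
    exact measurableSet_lt measurable_const (hh_sm x).measurable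
  have hq_bd : ∀ x ω, 0 ≤ q x ω ∧ q x ω ≤ 1 := by
    intro x ω
    constructor
    · exact le_max_left _ _
    · simp only [hq_def, max_le_iff]
      exact ⟨zero_le_one, min_le_left _ _⟩
  haveI : IsFiniteMeasure (ν.trim hm) := isFiniteMeasure_trim hm
  have hm' : m ⊔ MeasurableSpace.comap Y ⊤ ≤ mW := sup_le hm (comap_top_le hY)
  haveI : IsFiniteMeasure (ν.trim hm') := isFiniteMeasure_trim hm'
  have hh_nn : ∀ x, (0 : W → ℝ) ≤ᵐ[ν] h x := fun x => condExp_nonneg (ae_of_all _ (hiY_nn x))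
  have hg_nn : ∀ x, (0 : W → ℝ) ≤ᵐ[ν] g x := fun x =>
    condExp_nonneg (ae_of_all _ (fun ω => mul_nonneg (hf0 ω) (hiY_nn x ω)))
  have hgh : ∀ x, g x ≤ᵐ[ν] h x := fun x =>
    condExp_mono (hfiY_int x) (hiY_int x)
      (ae_of_all _ (fun ω => mul_le_of_le_one_left (hiY_nn x ω) (hf1 ω)))
  have hqh : ∀ x, (fun ω => q x ω * h x ω) =ᵐ[ν] g x := by
    intro x
    filter_upwards [hh_nn x, hg_nn x, hgh x] with ω h0 g0 gh
    by_cases hpos : 0 < h x ω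
    · have hd0 : 0 ≤ g x ω / h x ω := div_nonneg g0 h0
      have hd1 : g x ω / h x ω ≤ 1 := (div_le_one hpos).2 gh
      simp only [hq_def, if_pos hpos, min_eq_right hd1, max_eq_right (le_trans hd0 le_rfl)]
      exact div_mul_cancel₀ _ hpos.ne'
    · have h0' : h x ω = 0 := le_antisymm (not_lt.1 hpos) h0
      have g0' : g x ω = 0 := le_antisymm (h0' ▸ gh) g0
      simp [hq_def, h0', g0']
  refine ⟨q, hq_sm, hq_bd, ?_⟩
  have hGval : ∀ ω, (∑ x, iY x ω * q x ω) = q (Y ω) ω := by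
    intro ω
    rw [Finset.sum_eq_single (Y ω)]
    · simp [hiY_def]
    · intro b _ hb
      simp only [hiY_def]
      rw [if_neg (fun h => hb h.symm), zero_mul]
    · intro h; exact absurd (Finset.mem_univ _) h
  have hG_sm : StronglyMeasurable[m ⊔ MeasurableSpace.comap Y ⊤]
      (fun ω => ∑ x, iY x ω * q x ω) := by
    apply Finset.stronglyMeasurable_fun_sum
    intro x _
    exact ((hiY_sm x).mono le_sup_right).mul ((hq_sm x).mono le_sup_left)
  have hG_bd : ∀ ω, |∑ x, iY x ω * q x ω| ≤ 1 := by
    intro ω; rw [hGval ω, abs_le]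
    exact ⟨by linarith [(hq_bd (Y ω) ω).1], (hq_bd (Y ω) ω).2⟩
  have hG_int : Integrable (fun ω => ∑ x, iY x ω * q x ω) ν := by
    exact integrable_of_bdd ((hG_sm.mono hm').aestronglyMeasurable) hG_bd
  -- pi system
  set P : Set (Set W) := {A | ∃ B u, MeasurableSet[m] B ∧ A = B ∩ Y ⁻¹' u} with hP_def
  have hPi : IsPiSystem P := by
    rintro A ⟨B, u, hB, rfl⟩ A' ⟨B', u', hB', rfl⟩ -
    refine ⟨B ∩ B', u ∩ u', hB.inter hB', ?_⟩
    ext ω; simp only [mem_inter_iff, mem_preimage]; tauto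
  have hgen : m ⊔ MeasurableSpace.comap Y ⊤ = MeasurableSpace.generateFrom P := by
    apply le_antisymm
    · refine sup_le ?_ ?_
      · intro B hB
        exact measurableSet_generateFrom ⟨B, univ, hB, by simp⟩
      · rintro s ⟨u, -, rfl⟩
        exact measurableSet_generateFrom ⟨univ, u, MeasurableSet.univ, by simp⟩
    · refine generateFrom_le ?_
      rintro A ⟨B, u, hB, rfl⟩
      exact MeasurableSet.inter ((le_sup_left : m ≤ _) _ hB)
        ((le_sup_right : MeasurableSpace.comap Y ⊤ ≤ _) _ ⟨u, trivial, rfl⟩)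
  -- splitting set-integrals over B ∩ Y⁻¹ u
  have hsplit : ∀ (φ : W → ℝ), Integrable φ ν → ∀ (B : Set W), MeasurableSet[mW] B →
      ∀ u : Set (Fin e),
      ∫ ω in B ∩ Y ⁻¹' u, φ ω ∂ν
        = ∑ x ∈ Finset.univ.filter (· ∈ u), ∫ ω in B, iY x ω * φ ω ∂ν := by
    intro φ hφ B hB u
    have hYu : MeasurableSet[mW] (Y ⁻¹' u) := hY (u.toFinite.measurableSet)
    have hpt : ∀ ω, (Y ⁻¹' u).indicator φ ω
        = ∑ x ∈ Finset.univ.filter (· ∈ u), iY x ω * φ ω := by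
      intro ω
      rw [← Finset.sum_mul]
      have hs : (∑ x ∈ Finset.univ.filter (· ∈ u), iY x ω) = if Y ω ∈ u then 1 else 0 := by
        simp only [hiY_def]
        rw [Finset.sum_ite_eq]
        simp
      rw [hs, Set.indicator_apply, mem_preimage]
      split <;> ring
    have hind := setIntegral_indicator (μ := ν) (s := B) (f := φ) hYu
    rw [← hind]
    rw [show (fun ω => (Y ⁻¹' u).indicator φ ω)
        = fun ω => ∑ x ∈ Finset.univ.filter (· ∈ u), iY x ω * φ ω from funext hpt]
    exact integral_finset_sum _ (fun x _ =>
      (hφ.bdd_mul (c := 1) (hiY_m0 x) (ae_of_all _ fun ω => by simpa [Real.norm_eq_abs] using hiY_bd x ω)).integrableOn)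
  have hbasic : ∀ A ∈ P, ∫ ω in A, (∑ x, iY x ω * q x ω) ∂ν = ∫ ω in A, f ω ∂ν := by
    rintro A ⟨B, u, hB, rfl⟩
    have hB0 : MeasurableSet[mW] B := hm B hB
    rw [hsplit _ hG_int B hB0 u, hsplit _ hf_int B hB0 u]
    refine Finset.sum_congr rfl (fun x _ => ?_)
    have e1 : ∀ ω, iY x ω * (∑ y, iY y ω * q y ω) = q x ω * iY x ω := by
      intro ω
      rw [hGval ω]
      by_cases hx : Y ω = x
      · subst hx; ring
      · simp only [hiY_def, if_neg hx]; ring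
    have int_qiY : Integrable (fun ω => q x ω * iY x ω) ν := by
      refine integrable_of_bdd (C := 1)
        ((((hq_sm x).mono hm).aestronglyMeasurable).mul (hiY_m0 x)) ?_
      intro ω
      rw [abs_mul]
      calc |q x ω| * |iY x ω| ≤ 1 * 1 := by
            refine mul_le_mul ?_ (hiY_bd x ω) (abs_nonneg _) zero_le_one
            rw [abs_le]; exact ⟨by linarith [(hq_bd x ω).1], (hq_bd x ω).2⟩
        _ = 1 := by ring
    calc ∫ ω in B, iY x ω * (∑ y, iY y ω * q y ω) ∂ν
        = ∫ ω in B, q x ω * iY x ω ∂ν := by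
          rw [show (fun ω => iY x ω * (∑ y, iY y ω * q y ω))
            = fun ω => q x ω * iY x ω from funext e1]
      _ = ∫ ω in B, (ν[fun ω => q x ω * iY x ω|m]) ω ∂ν :=
          (setIntegral_condExp hm int_qiY hB).symm
      _ = ∫ ω in B, g x ω ∂ν := by
          refine integral_congr_ae (ae_restrict_of_ae ?_)
          calc ν[fun ω => q x ω * iY x ω|m]
              =ᵐ[ν] q x * ν[iY x|m] :=
                condExp_mul_of_stronglyMeasurable_left (hq_sm x) int_qiY (hiY_int x)
            _ =ᵐ[ν] g x := hqh x
      _ = ∫ ω in B, f ω * iY x ω ∂ν := setIntegral_condExp hm (hfiY_int x) hB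
      _ = ∫ ω in B, iY x ω * f ω ∂ν := by
          congr 1; funext ω; ring
  have huniv : ∫ ω, (∑ x, iY x ω * q x ω) ∂ν = ∫ ω, f ω ∂ν := by
    have := hbasic univ ⟨univ, univ, (MeasurableSet.univ : MeasurableSet[m] univ), by simp⟩
    simpa [Measure.restrict_univ] using this
  exact (ae_eq_condExp_of_forall_setIntegral_eq hm' hf_int
    (fun s _ _ => hG_int.integrableOn)
    (fun s hs _ => setIntegral_eq_of_piSystem hgen hPi hm' hG_int hf_int huniv hbasic s hs)
    (hG_sm.aestronglyMeasurable)).symm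


lemma ind_eq_indS (X : ℝ → Ω → Fin d) (t : ℝ) (y : Fin d) : ind X t y = indS X t {y} := by
  funext ω; simp [ind, indS]

lemma indS_eq_sum_ind (X : ℝ → Ω → Fin d) (r : ℝ) (u : Set (Fin d)) (ω : Ω) :
    indS X r u ω = ∑ y ∈ Finset.univ.filter (· ∈ u), ind X r y ω := by
  unfold indS ind
  rw [Finset.sum_ite_eq]
  simp

lemma ae_finset_sum {ι : Type*} (F : Finset ι) {f g : ι → Ω → ℝ}
    (h : ∀ i ∈ F, f i =ᵐ[μ] g i) : (∑ i ∈ F, f i) =ᵐ[μ] ∑ i ∈ F, g i := by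
  have h' : ∀ᵐ ω ∂μ, ∀ i ∈ F, f i ω = g i ω := (ae_ball_iff F.countable_toSet).2 h
  filter_upwards [h'] with ω hω
  simp only [Finset.sum_apply]
  exact Finset.sum_congr rfl hω

lemma measurable_X_of_adapted {𝒢 : Filtration ℝ m0} {X : ℝ → Ω → Fin d}
    (hadp : ∀ t : ℝ, Measurable[𝒢 t] (X t)) (r : ℝ) : Measurable[m0] (X r) :=
  (hadp r).mono (𝒢.le r) le_rfl

lemma integrable_indS [IsFiniteMeasure μ] {𝒢 : Filtration ℝ m0} {X : ℝ → Ω → Fin d}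
    (hadp : ∀ t : ℝ, Measurable[𝒢 t] (X t)) (r : ℝ) (u : Set (Fin d)) :
    Integrable (indS X r u) μ :=
  integrable_of_bdd ((stronglyMeasurable_indS
    (measurable_X_of_adapted hadp r) u).aestronglyMeasurable) (abs_indS_le_one X r u)

/-- The DSMC property for set indicators. -/
lemma dsmc_indS [IsProbabilityMeasure μ] {ℱ 𝒢 : Filtration ℝ m0} {T : ℝ}
    {X : ℝ → Ω → Fin d} (hadp : ∀ t : ℝ, Measurable[𝒢 t] (X t))
    (hX : IsDSMC μ ℱ 𝒢 T X) {s' r : ℝ} (h0 : 0 ≤ s') (hsr : s' ≤ r) (hrT : r ≤ T)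
    (u : Set (Fin d)) :
    μ[indS X r u | (ℱ T : MeasurableSpace Ω) ⊔ 𝒢 s']
      =ᵐ[μ] μ[indS X r u | (ℱ r : MeasurableSpace Ω) ⊔ MeasurableSpace.comap (X s') ⊤] := by
  have hrw : indS X r u = ∑ y ∈ Finset.univ.filter (· ∈ u), ind X r y := by
    funext ω
    rw [indS_eq_sum_ind X r u ω, Finset.sum_apply]
  have hint : ∀ y ∈ Finset.univ.filter (· ∈ u), Integrable (ind X r y) μ := by
    intro y _
    rw [ind_eq_indS]
    exact integrable_indS hadp r {y}
  rw [hrw]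
  calc μ[∑ y ∈ Finset.univ.filter (· ∈ u), ind X r y | (ℱ T : MeasurableSpace Ω) ⊔ 𝒢 s']
      =ᵐ[μ] ∑ y ∈ Finset.univ.filter (· ∈ u),
        μ[ind X r y | (ℱ T : MeasurableSpace Ω) ⊔ 𝒢 s'] := condExp_finset_sum hint _
    _ =ᵐ[μ] ∑ y ∈ Finset.univ.filter (· ∈ u),
        μ[ind X r y | (ℱ r : MeasurableSpace Ω) ⊔ MeasurableSpace.comap (X s') ⊤] :=
        ae_finset_sum _ (fun y _ => hX s' r h0 hsr hrT y)
    _ =ᵐ[μ] μ[∑ y ∈ Finset.univ.filter (· ∈ u), ind X r y |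
        (ℱ r : MeasurableSpace Ω) ⊔ MeasurableSpace.comap (X s') ⊤] :=
        (condExp_finset_sum hint _).symm

lemma stronglyMeasurable_prodIndS {m : MeasurableSpace Ω} {X : ℝ → Ω → Fin d}
    (τ : Finset ℝ) (u : ℝ → Set (Fin d)) (h : ∀ r ∈ τ, Measurable[m] (X r)) :
    StronglyMeasurable[m] (fun ω => ∏ r ∈ τ, indS X r (u r) ω) :=
  Finset.stronglyMeasurable_fun_prod _ (fun r hr => stronglyMeasurable_indS (h r hr) (u r))

lemma prodIndS_nonneg {X : ℝ → Ω → Fin d} (τ : Finset ℝ) (u : ℝ → Set (Fin d)) (ω : Ω) :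
    0 ≤ ∏ r ∈ τ, indS X r (u r) ω :=
  Finset.prod_nonneg (fun r _ => indS_nonneg X r (u r) ω)

lemma prodIndS_le_one {X : ℝ → Ω → Fin d} (τ : Finset ℝ) (u : ℝ → Set (Fin d)) (ω : Ω) :
    ∏ r ∈ τ, indS X r (u r) ω ≤ 1 :=
  Finset.prod_le_one (fun r _ => indS_nonneg X r (u r) ω) (fun r _ => indS_le_one X r (u r) ω)

lemma abs_prodIndS_le_one {X : ℝ → Ω → Fin d} (τ : Finset ℝ) (u : ℝ → Set (Fin d)) (ω : Ω) :
    |∏ r ∈ τ, indS X r (u r) ω| ≤ 1 :=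
  abs_le.2 ⟨by linarith [prodIndS_nonneg (X := X) τ u ω], prodIndS_le_one τ u ω⟩

lemma integrable_prodIndS [IsFiniteMeasure μ] {𝒢 : Filtration ℝ m0} {X : ℝ → Ω → Fin d}
    (hadp : ∀ t : ℝ, Measurable[𝒢 t] (X t)) (τ : Finset ℝ) (u : ℝ → Set (Fin d)) :
    Integrable (fun ω => ∏ r ∈ τ, indS X r (u r) ω) μ :=
  integrable_of_bdd ((stronglyMeasurable_prodIndS τ u
    (fun r _ => measurable_X_of_adapted hadp r)).aestronglyMeasurable) (abs_prodIndS_le_one τ u)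

/-- Main lemma: conditional independence of the path up to time `s` from `ℱ T` given `ℱ s`. -/
lemma key [IsProbabilityMeasure μ] {ℱ 𝒢 : Filtration ℝ m0} {T : ℝ}
    {X : ℝ → Ω → Fin d} (hadp : ∀ t : ℝ, Measurable[𝒢 t] (X t))
    (hX : IsDSMC μ ℱ 𝒢 T X)
    (hinit : ∀ x : Fin d, μ[ind X 0 x | ℱ T] =ᵐ[μ] μ[ind X 0 x | ℱ 0]) :
    ∀ (τ : Finset ℝ) (u : ℝ → Set (Fin d)) (s : ℝ),
      (∀ r ∈ τ, 0 ≤ r) → (∀ r ∈ τ, r ≤ s) → s ≤ T →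
      μ[(fun ω => ∏ r ∈ τ, indS X r (u r) ω) | ℱ T]
        =ᵐ[μ] μ[(fun ω => ∏ r ∈ τ, indS X r (u r) ω) | ℱ s] := by
  intro τ
  induction τ using Finset.induction_on_max with
  | empty =>
    intro u s _ _ _
    simp only [Finset.prod_empty]
    rw [condExp_const (ℱ.le T), condExp_const (ℱ.le s)]
  | insert r τ' hlt IH =>
    intro u s hr0 hrs hsT
    have hXm : ∀ r'', Measurable[m0] (X r'') := measurable_X_of_adapted hadp
    have hrτ' : r ∉ τ' := fun h => lt_irrefl r (hlt r h)
    have h0r : 0 ≤ r := hr0 r (Finset.mem_insert_self r τ')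
    have hrs' : r ≤ s := hrs r (Finset.mem_insert_self r τ')
    have hrT : r ≤ T := le_trans hrs' hsT
    have h0s : 0 ≤ s := le_trans h0r hrs'
    simp only [Finset.prod_insert hrτ']
    -- choose the conditioning time s' : 0 if τ' is empty, else max of τ'
    rcases Finset.eq_empty_or_nonempty τ' with rfl | hne
    · -- base: single time r, use the initial condition
      simp only [Finset.prod_empty, mul_one]
      obtain ⟨q, hq_sm, hq_bd, hq_eq⟩ := condExp_sup_comap (ν := μ) (ℱ.le r) (hXm 0)
        ((stronglyMeasurable_indS (hXm r) (u r)).measurable) (indS_nonneg X r (u r))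
        (indS_le_one X r (u r))
      have hDS := dsmc_indS hadp hX le_rfl h0r hrT (u r)
      have hmsup : (ℱ T : MeasurableSpace Ω) ⊔ 𝒢 0 ≤ m0 := sup_le (ℱ.le T) (𝒢.le 0)
      haveI : IsFiniteMeasure (μ.trim hmsup) := isFiniteMeasure_trim hmsup
      have htopT : (ℱ T : MeasurableSpace Ω) ≤ (ℱ T : MeasurableSpace Ω) ⊔ 𝒢 0 := le_sup_left
      have hGig : μ[indS X r (u r)|(ℱ T : MeasurableSpace Ω) ⊔ 𝒢 0]
          =ᵐ[μ] fun ω => ∑ x, (if X 0 ω = x then 1 else 0) * q x ω := hDS.trans hq_eq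
      have hq_abs : ∀ x ω, |q x ω| ≤ 1 := fun x ω =>
        abs_le.2 ⟨by linarith [(hq_bd x ω).1], (hq_bd x ω).2⟩
      have hterm_int : ∀ x : Fin d, Integrable (fun ω => q x ω * ind X 0 x ω) μ := by
        intro x
        refine integrable_of_bdd (C := 1)
          ((((hq_sm x).mono (ℱ.le r)).aestronglyMeasurable).mul
            ((stronglyMeasurable_indS (m := m0) (hXm 0) {x}).aestronglyMeasurable.congr
              (by rw [← ind_eq_indS]))) ?_
        intro ω
        rw [abs_mul, ind_eq_indS]
        calc |q x ω| * |indS X 0 {x} ω| ≤ 1 * 1 :=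
            mul_le_mul (hq_abs x ω) (abs_indS_le_one X 0 {x} ω) (abs_nonneg _) zero_le_one
          _ = 1 := by ring
      have hGsum : (fun ω => ∑ x, (if X 0 ω = x then 1 else 0) * q x ω)
          = ∑ x, fun ω => q x ω * ind X 0 x ω := by
        funext ω
        rw [Finset.sum_apply]
        exact Finset.sum_congr rfl (fun x _ => mul_comm _ _)
      -- conditional expectations of ind X 0 x agree at times 0, s, T
      have hxTs : ∀ x, μ[ind X 0 x|ℱ T] =ᵐ[μ] μ[ind X 0 x|ℱ s] := by
        intro x
        refine (hinit x).trans ?_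
        have e1 : μ[ind X 0 x|ℱ s] =ᵐ[μ] μ[μ[ind X 0 x|ℱ T]|ℱ s] :=
          (condExp_condExp_of_le (ℱ.mono hsT) (ℱ.le T)).symm
        have e2 : μ[μ[ind X 0 x|ℱ T]|ℱ s] =ᵐ[μ] μ[μ[ind X 0 x|ℱ 0]|ℱ s] :=
          condExp_congr_ae (hinit x)
        have e3 : μ[μ[ind X 0 x|ℱ 0]|ℱ s] = μ[ind X 0 x|ℱ 0] :=
          condExp_of_stronglyMeasurable (ℱ.le s)
            (stronglyMeasurable_condExp.mono (ℱ.mono h0s)) integrable_condExp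
        exact ((e1.trans e2).trans (Filter.EventuallyEq.of_eq e3)).symm
      have hsum_eq : ∀ t'' : ℝ, r ≤ t'' →
          μ[(fun ω => ∑ x, (if X 0 ω = x then 1 else 0) * q x ω)|ℱ t'']
            =ᵐ[μ] ∑ x, fun ω => q x ω * (μ[ind X 0 x|ℱ t'']) ω := by
        intro t'' hrt
        rw [hGsum]
        refine (condExp_finset_sum (fun x _ => hterm_int x) _).trans ?_
        refine ae_finset_sum _ (fun x _ => ?_)
        exact condExp_mul_of_stronglyMeasurable_left ((hq_sm x).mono (ℱ.mono hrt))
          (hterm_int x) (by rw [ind_eq_indS]; exact integrable_indS hadp 0 {x})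
      have hmid : μ[(fun ω => ∑ x, (if X 0 ω = x then 1 else 0) * q x ω)|ℱ T]
          =ᵐ[μ] μ[(fun ω => ∑ x, (if X 0 ω = x then 1 else 0) * q x ω)|ℱ s] := by
        refine (hsum_eq T hrT).trans (Filter.EventuallyEq.trans ?_ (hsum_eq s hrs').symm)
        refine ae_finset_sum _ (fun x _ => ?_)
        filter_upwards [hxTs x] with ω h
        simp only [h]
      calc μ[indS X r (u r)|ℱ T]
          =ᵐ[μ] μ[μ[indS X r (u r)|(ℱ T : MeasurableSpace Ω) ⊔ 𝒢 0]|ℱ T] :=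
            (condExp_condExp_of_le htopT hmsup).symm
        _ =ᵐ[μ] μ[(fun ω => ∑ x, (if X 0 ω = x then 1 else 0) * q x ω)|ℱ T] :=
            condExp_congr_ae hGig
        _ =ᵐ[μ] μ[(fun ω => ∑ x, (if X 0 ω = x then 1 else 0) * q x ω)|ℱ s] := hmid
        _ =ᵐ[μ] μ[μ[indS X r (u r)|(ℱ T : MeasurableSpace Ω) ⊔ 𝒢 0]|ℱ s] :=
            (condExp_congr_ae hGig).symm
        _ =ᵐ[μ] μ[indS X r (u r)|ℱ s] :=
            condExp_condExp_of_le ((ℱ.mono hsT).trans htopT) hmsup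
    · -- inductive case: condition at the largest time r' of τ'
      set r' := τ'.max' hne with hr'_def
      have hr'mem : r' ∈ τ' := τ'.max'_mem hne
      have hmax : ∀ b ∈ τ', b ≤ r' := fun b hb => Finset.le_max' τ' b hb
      have hr'r : r' < r := hlt r' hr'mem
      have h0r' : 0 ≤ r' := hr0 r' (Finset.mem_insert_of_mem hr'mem)
      have hmsup : (ℱ T : MeasurableSpace Ω) ⊔ 𝒢 r' ≤ m0 := sup_le (ℱ.le T) (𝒢.le r')
      haveI : IsFiniteMeasure (μ.trim hmsup) := isFiniteMeasure_trim hmsup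
      have htopT : (ℱ T : MeasurableSpace Ω) ≤ (ℱ T : MeasurableSpace Ω) ⊔ 𝒢 r' := le_sup_left
      obtain ⟨q, hq_sm, hq_bd, hq_eq⟩ := condExp_sup_comap (ν := μ) (ℱ.le r) (hXm r')
        ((stronglyMeasurable_indS (hXm r) (u r)).measurable) (indS_nonneg X r (u r))
        (indS_le_one X r (u r))
      have hq_abs : ∀ x ω, |q x ω| ≤ 1 := fun x ω =>
        abs_le.2 ⟨by linarith [(hq_bd x ω).1], (hq_bd x ω).2⟩
      have hDS := dsmc_indS hadp hX h0r' hr'r.le hrT (u r)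
      have hGig : μ[indS X r (u r)|(ℱ T : MeasurableSpace Ω) ⊔ 𝒢 r']
          =ᵐ[μ] fun ω => ∑ x, (if X r' ω = x then 1 else 0) * q x ω := hDS.trans hq_eq
      set Pprod : Ω → ℝ := fun ω => ∏ b ∈ τ', indS X b (u b) ω with hPprod_def
      have hPprodsm : StronglyMeasurable[𝒢 r'] Pprod :=
        stronglyMeasurable_prodIndS τ' u
          (fun b hb => (hadp b).mono (𝒢.mono (hmax b hb)) le_rfl)
      have hPprodint : Integrable Pprod μ := integrable_prodIndS hadp τ' u
      set Px : Fin d → Ω → ℝ :=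
        fun x ω => ∏ b ∈ τ', indS X b (Function.update u r' {x} b) ω with hPx_def
      have hPx_int : ∀ x, Integrable (Px x) μ :=
        fun x => integrable_prodIndS hadp τ' (Function.update u r' {x})
      have hqPx_int : ∀ x, Integrable (fun ω => q x ω * Px x ω) μ := by
        intro x
        refine integrable_of_bdd (C := 1)
          ((((hq_sm x).mono (ℱ.le r)).aestronglyMeasurable).mul
            (hPx_int x).aestronglyMeasurable) ?_
        intro ω
        rw [abs_mul]
        calc |q x ω| * |Px x ω| ≤ 1 * 1 :=
            mul_le_mul (hq_abs x ω) (abs_prodIndS_le_one τ' _ ω) (abs_nonneg _) zero_le_one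
          _ = 1 := by ring
      have hprod_int : Integrable (fun ω => Pprod ω * indS X r (u r) ω) μ := by
        refine integrable_of_bdd (C := 1)
          ((hPprodint.aestronglyMeasurable).mul
            ((stronglyMeasurable_indS (hXm r) (u r)).aestronglyMeasurable)) ?_
        intro ω
        rw [abs_mul]
        calc |Pprod ω| * |indS X r (u r) ω| ≤ 1 * 1 :=
            mul_le_mul (abs_prodIndS_le_one τ' u ω) (abs_indS_le_one X r (u r) ω)
              (abs_nonneg _) zero_le_one
          _ = 1 := by ring
      -- pointwise splitting identity
      have hsplit : ∀ ω, Pprod ω * (∑ x, (if X r' ω = x then 1 else 0) * q x ω)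
          = ∑ x ∈ Finset.univ.filter (· ∈ u r'), q x ω * Px x ω := by
        intro ω
        rw [Finset.mul_sum, Finset.sum_filter]
        refine Finset.sum_congr rfl (fun x _ => ?_)
        have herase : ∏ b ∈ τ'.erase r', indS X b (Function.update u r' {x} b) ω
            = ∏ b ∈ τ'.erase r', indS X b (u b) ω := by
          refine Finset.prod_congr rfl (fun b hb => ?_)
          rw [Function.update_of_ne (Finset.ne_of_mem_erase hb)]
        have hPprode : Pprod ω = indS X r' (u r') ω * ∏ b ∈ τ'.erase r', indS X b (u b) ω :=
          (Finset.mul_prod_erase τ' _ hr'mem).symm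
        have hPxe : Px x ω = indS X r' {x} ω * ∏ b ∈ τ'.erase r', indS X b (u b) ω := by
          rw [hPx_def]
          simp only
          rw [← Finset.mul_prod_erase τ' _ hr'mem, Function.update_self, herase]
        rw [hPprode, hPxe]
        by_cases hxe : X r' ω = x
        · simp only [indS, hxe, Set.mem_singleton_iff, if_pos rfl]
          split_ifs <;> ring
        · simp only [indS, Set.mem_singleton_iff, if_neg hxe]
          split_ifs <;> ring
      -- the function H
      set H : Ω → ℝ := fun ω => ∑ x ∈ Finset.univ.filter (· ∈ u r'), q x ω * Px x ω with hH_def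
      have hmain : μ[(fun ω => Pprod ω * indS X r (u r) ω)|(ℱ T : MeasurableSpace Ω) ⊔ 𝒢 r']
          =ᵐ[μ] H := by
        refine (condExp_mul_of_stronglyMeasurable_left (m := (ℱ T : MeasurableSpace Ω) ⊔ 𝒢 r')
          (hPprodsm.mono le_sup_right) hprod_int
          (integrable_indS hadp r (u r))).trans ?_
        refine Filter.EventuallyEq.trans ?_ (Filter.EventuallyEq.of_eq (funext hsplit))
        filter_upwards [hGig] with ω h
        show Pprod ω * (μ[indS X r (u r)|(ℱ T : MeasurableSpace Ω) ⊔ 𝒢 r']) ω = _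
        rw [h]
      have hHsum : H = ∑ x ∈ Finset.univ.filter (· ∈ u r'), fun ω => q x ω * Px x ω := by
        funext ω
        rw [hH_def, Finset.sum_apply]
      have hHcond : ∀ t'' : ℝ, r ≤ t'' →
          μ[H|ℱ t''] =ᵐ[μ] ∑ x ∈ Finset.univ.filter (· ∈ u r'),
            fun ω => q x ω * (μ[Px x|ℱ t'']) ω := by
        intro t'' hrt
        rw [hHsum]
        refine (condExp_finset_sum (fun x _ => hqPx_int x) _).trans ?_
        refine ae_finset_sum _ (fun x _ => ?_)
        exact condExp_mul_of_stronglyMeasurable_left ((hq_sm x).mono (ℱ.mono hrt))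
          (hqPx_int x) (hPx_int x)
      have hmid : μ[H|ℱ T] =ᵐ[μ] μ[H|ℱ s] := by
        refine (hHcond T hrT).trans (Filter.EventuallyEq.trans ?_ (hHcond s hrs').symm)
        refine ae_finset_sum _ (fun x _ => ?_)
        have hIH := IH (Function.update u r' {x}) s
          (fun b hb => hr0 b (Finset.mem_insert_of_mem hb))
          (fun b hb => hrs b (Finset.mem_insert_of_mem hb)) hsT
        filter_upwards [hIH] with ω h
        exact congrArg (fun z => q x ω * z) h
      have hcomm : (fun ω => indS X r (u r) ω * Pprod ω) = fun ω => Pprod ω * indS X r (u r) ω := by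
        funext ω; ring
      rw [hcomm]
      calc μ[(fun ω => Pprod ω * indS X r (u r) ω)|ℱ T]
          =ᵐ[μ] μ[μ[(fun ω => Pprod ω * indS X r (u r) ω)|(ℱ T : MeasurableSpace Ω) ⊔ 𝒢 r']|ℱ T] :=
            (condExp_condExp_of_le htopT hmsup).symm
        _ =ᵐ[μ] μ[H|ℱ T] := condExp_congr_ae hmain
        _ =ᵐ[μ] μ[H|ℱ s] := hmid
        _ =ᵐ[μ] μ[μ[(fun ω => Pprod ω * indS X r (u r) ω)|(ℱ T : MeasurableSpace Ω) ⊔ 𝒢 r']|ℱ s] :=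
            (condExp_congr_ae hmain).symm
        _ =ᵐ[μ] μ[(fun ω => Pprod ω * indS X r (u r) ω)|ℱ s] :=
            condExp_condExp_of_le ((ℱ.mono hsT).trans htopT) hmsup


end DSMC
end

/-- If `X` is an `(𝔽,𝔾)`-DSMC whose initial state satisfies
`ℙ(X_0 = x | ℱ_T) = ℙ(X_0 = x | ℱ_0)` for all `x`, then for all
`0 ≤ t_1 ≤ … ≤ t_n ≤ t ≤ T`,
`ℙ(X_{t_1} = x_1, …, X_{t_n} = x_n | ℱ_T) = ℙ(X_{t_1} = x_1, …, X_{t_n} = x_n | ℱ_t)` a.s.,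
and consequently `𝔽` is `ℙ`-immersed in `𝔽 ∨ 𝔽^X` (here expressed by the standard
characterization: conditional expectations of bounded `ℱ_T`-measurable variables given
`ℱ_t ∨ ℱ^X_t` coincide with those given `ℱ_t`). -/
theorem dsmc_conditional_independence_and_immersion
    {m0 : MeasurableSpace Ω} (μ : Measure Ω) [IsProbabilityMeasure μ]
    (ℱ 𝒢 : Filtration ℝ m0) (T : ℝ) (hT : 0 < T) (d : ℕ) (X : ℝ → Ω → Fin d)
    (hadp : ∀ t : ℝ, Measurable[𝒢 t] (X t))
    (hX : IsDSMC μ ℱ 𝒢 T X)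
    (hinit : ∀ x : Fin d, μ[ind X 0 x | ℱ T] =ᵐ[μ] μ[ind X 0 x | ℱ 0]) :
    (∀ (n : ℕ) (t : ℕ → ℝ) (x : ℕ → Fin d) (s : ℝ),
      (∀ k, 1 ≤ k → k < n → t k ≤ t (k + 1)) → (∀ k, 1 ≤ k → k ≤ n → 0 ≤ t k) →
      t n ≤ s → s ≤ T →
      μ[(fun ω => ∏ k ∈ Finset.Icc 1 n, ind X (t k) (x k) ω) | ℱ T]
        =ᵐ[μ] μ[(fun ω => ∏ k ∈ Finset.Icc 1 n, ind X (t k) (x k) ω) | ℱ s]) ∧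
    (∀ ψ : Ω → ℝ, Measurable[ℱ T] ψ → (∃ C, ∀ ω, |ψ ω| ≤ C) →
      ∀ t ∈ Set.Icc (0:ℝ) T,
        μ[ψ | (ℱ t : MeasurableSpace Ω)
            ⊔ (⨆ s ∈ Set.Icc (0:ℝ) t, MeasurableSpace.comap (X s) ⊤)]
          =ᵐ[μ] μ[ψ | ℱ t]) := by
  classical
  have hXm : ∀ r, Measurable[m0] (X r) := DSMC.measurable_X_of_adapted hadp
  constructor
  · -- Part 1: finite-dimensional conditional independence
    intro n t x s hk hk0 hns hsT
    have hchain : ∀ j, j ≤ n → ∀ k, 1 ≤ k → k ≤ j → t k ≤ t j := by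
      intro j hjn
      induction j with
      | zero => intro k h1 h2; omega
      | succ j ih =>
        intro k h1 h2
        rcases eq_or_lt_of_le h2 with rfl | hlt
        · exact le_rfl
        · have hkj : k ≤ j := Nat.lt_succ_iff.1 hlt
          have h1j : 1 ≤ j := le_trans h1 hkj
          have hjn' : j ≤ n := le_trans (Nat.le_succ j) hjn
          exact (ih hjn' k h1 hkj).trans (hk j h1j (lt_of_lt_of_le (Nat.lt_succ_self j) hjn))
    set τ : Finset ℝ := (Finset.Icc 1 n).image t with hτ_def
    set u : ℝ → Set (Fin d) := fun ρ => {y | ∀ k ∈ Finset.Icc 1 n, t k = ρ → y = x k} with hu_def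
    have hprod : (fun ω => ∏ k ∈ Finset.Icc 1 n, ind X (t k) (x k) ω)
        = fun ω => ∏ ρ ∈ τ, DSMC.indS X ρ (u ρ) ω := by
      funext ω
      have hL : ∏ k ∈ Finset.Icc 1 n, ind X (t k) (x k) ω
          = if ∀ k ∈ Finset.Icc 1 n, X (t k) ω = x k then 1 else 0 := by
        by_cases hcond : ∀ k ∈ Finset.Icc 1 n, X (t k) ω = x k
        · rw [if_pos hcond]
          exact Finset.prod_eq_one (fun k hkm => by simp [ind, hcond k hkm])
        · rw [if_neg hcond]
          push_neg at hcond
          obtain ⟨k, hkm, hne⟩ := hcond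
          exact Finset.prod_eq_zero hkm (by simp [ind, hne])
      have hR : ∏ ρ ∈ τ, DSMC.indS X ρ (u ρ) ω
          = if ∀ ρ ∈ τ, X ρ ω ∈ u ρ then 1 else 0 := by
        by_cases hcond : ∀ ρ ∈ τ, X ρ ω ∈ u ρ
        · rw [if_pos hcond]
          exact Finset.prod_eq_one (fun ρ hρ => by simp [DSMC.indS, hcond ρ hρ])
        · rw [if_neg hcond]
          push_neg at hcond
          obtain ⟨ρ, hρ, hne⟩ := hcond
          exact Finset.prod_eq_zero hρ (by simp [DSMC.indS, hne])
      rw [hL, hR]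
      congr 1
      apply propext
      constructor
      · intro h ρ hρ
        obtain ⟨k, hkmem, rfl⟩ := Finset.mem_image.1 hρ
        intro k' hk' hk'eq
        rw [← hk'eq]
        exact h k' hk'
      · intro h k hkmem
        exact h (t k) (Finset.mem_image_of_mem t hkmem) k hkmem rfl
    rw [hprod]
    refine DSMC.key hadp hX hinit τ u s ?_ ?_ hsT
    · intro ρ hρ
      obtain ⟨k, hkmem, rfl⟩ := Finset.mem_image.1 hρ
      obtain ⟨h1, h2⟩ := Finset.mem_Icc.1 hkmem
      exact hk0 k h1 h2
    · intro ρ hρ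
      obtain ⟨k, hkmem, rfl⟩ := Finset.mem_image.1 hρ
      obtain ⟨h1, h2⟩ := Finset.mem_Icc.1 hkmem
      exact le_trans (hchain n le_rfl k h1 h2) hns
  · -- Part 2: immersion
    intro ψ hψm hψbd t ht
    obtain ⟨c0, hc0⟩ := hψbd
    obtain ⟨h0t, htT⟩ := ht
    have hm2 : (ℱ t : MeasurableSpace Ω)
        ⊔ (⨆ s ∈ Set.Icc (0:ℝ) t, MeasurableSpace.comap (X s) ⊤) ≤ m0 :=
      sup_le (ℱ.le t) (iSup₂_le fun s _ => DSMC.comap_top_le (hXm s))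
    haveI : IsFiniteMeasure (μ.trim hm2) := isFiniteMeasure_trim hm2
    have hψsm : StronglyMeasurable[(ℱ T : MeasurableSpace Ω)] ψ := hψm.stronglyMeasurable
    have hψaesm : AEStronglyMeasurable ψ μ :=
      ((hψsm.mono (ℱ.le T)).aestronglyMeasurable)
    have hψint : Integrable ψ μ := DSMC.integrable_of_bdd hψaesm hc0
    have hψPi_int : ∀ (τ : Finset ℝ) (v : ℝ → Set (Fin d)),
        Integrable (fun ω => ψ ω * ∏ ρ ∈ τ, DSMC.indS X ρ (v ρ) ω) μ := by
      intro τ v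
      refine DSMC.integrable_of_bdd (C := |c0|)
        (hψaesm.mul (DSMC.integrable_prodIndS hadp τ v).aestronglyMeasurable) ?_
      intro ω
      rw [abs_mul]
      calc |ψ ω| * |∏ ρ ∈ τ, DSMC.indS X ρ (v ρ) ω| ≤ |ψ ω| * 1 :=
            mul_le_mul_of_nonneg_left (DSMC.abs_prodIndS_le_one τ v ω) (abs_nonneg _)
        _ = |ψ ω| := mul_one _
        _ ≤ c0 := hc0 ω
        _ ≤ |c0| := le_abs_self c0
    -- conditional independence: E[ψ Π | ℱ_t] = E[Π|ℱ_t] E[ψ|ℱ_t]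
    have hcondR : ∀ (τ : Finset ℝ), ↑τ ⊆ Set.Icc (0:ℝ) t → ∀ v : ℝ → Set (Fin d),
        μ[fun ω => ψ ω * ∏ ρ ∈ τ, DSMC.indS X ρ (v ρ) ω|ℱ t]
          =ᵐ[μ] fun ω => (μ[(fun ω' => ∏ ρ ∈ τ, DSMC.indS X ρ (v ρ) ω')|ℱ t]) ω
            * (μ[ψ|ℱ t]) ω := by
      intro τ hτ v
      have hPi_int : Integrable (fun ω => ∏ ρ ∈ τ, DSMC.indS X ρ (v ρ) ω) μ :=
        DSMC.integrable_prodIndS hadp τ v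
      have hkey := DSMC.key hadp hX hinit τ v t
        (fun ρ hρ => (hτ (Finset.mem_coe.2 hρ)).1) (fun ρ hρ => (hτ (Finset.mem_coe.2 hρ)).2) htT
      have hint1 : Integrable
          (fun ω => ψ ω * (μ[(fun ω' => ∏ ρ ∈ τ, DSMC.indS X ρ (v ρ) ω')|ℱ t]) ω) μ :=
        Integrable.bdd_mul (c := c0) integrable_condExp hψaesm
          (ae_of_all _ fun ω => by simpa [Real.norm_eq_abs] using hc0 ω)
      have hint2 : Integrable
          (fun ω => (μ[(fun ω' => ∏ ρ ∈ τ, DSMC.indS X ρ (v ρ) ω')|ℱ t]) ω * ψ ω) μ := by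
        have hcm : (fun ω => (μ[(fun ω' => ∏ ρ ∈ τ, DSMC.indS X ρ (v ρ) ω')|ℱ t]) ω * ψ ω)
            = fun ω => ψ ω * (μ[(fun ω' => ∏ ρ ∈ τ, DSMC.indS X ρ (v ρ) ω')|ℱ t]) ω :=
          funext fun ω => mul_comm _ _
        rw [hcm]; exact hint1
      calc μ[fun ω => ψ ω * ∏ ρ ∈ τ, DSMC.indS X ρ (v ρ) ω|ℱ t]
          =ᵐ[μ] μ[μ[fun ω => ψ ω * ∏ ρ ∈ τ, DSMC.indS X ρ (v ρ) ω|ℱ T]|ℱ t] :=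
            (condExp_condExp_of_le (ℱ.mono htT) (ℱ.le T)).symm
        _ =ᵐ[μ] μ[fun ω => ψ ω
              * (μ[(fun ω' => ∏ ρ ∈ τ, DSMC.indS X ρ (v ρ) ω')|ℱ T]) ω|ℱ t] :=
            condExp_congr_ae (condExp_mul_of_stronglyMeasurable_left (m := (ℱ T : MeasurableSpace Ω))
              hψsm (hψPi_int τ v) hPi_int)
        _ =ᵐ[μ] μ[fun ω => ψ ω
              * (μ[(fun ω' => ∏ ρ ∈ τ, DSMC.indS X ρ (v ρ) ω')|ℱ t]) ω|ℱ t] :=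
            condExp_congr_ae (by filter_upwards [hkey] with ω h; rw [h])
        _ =ᵐ[μ] fun ω => (μ[(fun ω' => ∏ ρ ∈ τ, DSMC.indS X ρ (v ρ) ω')|ℱ t]) ω
              * (μ[ψ|ℱ t]) ω := by
            have hcm : (fun ω => ψ ω * (μ[(fun ω' => ∏ ρ ∈ τ, DSMC.indS X ρ (v ρ) ω')|ℱ t]) ω)
                = fun ω => (μ[(fun ω' => ∏ ρ ∈ τ, DSMC.indS X ρ (v ρ) ω')|ℱ t]) ω * ψ ω :=
              funext fun ω => mul_comm _ _
            rw [hcm]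
            exact condExp_mul_of_stronglyMeasurable_left (m := (ℱ t : MeasurableSpace Ω))
              stronglyMeasurable_condExp hint2 hψint
    -- π-system of generating sets
    set P : Set (Set Ω) := {A | ∃ B : Set Ω, MeasurableSet[(ℱ t : MeasurableSpace Ω)] B ∧
      ∃ τ : Finset ℝ, ↑τ ⊆ Set.Icc (0:ℝ) t ∧ ∃ v : ℝ → Set (Fin d),
        A = B ∩ ⋂ ρ ∈ τ, X ρ ⁻¹' (v ρ)} with hP_def
    have hPiSys : IsPiSystem P := by
      rintro A ⟨B, hB, τ, hτ, v, rfl⟩ A' ⟨B', hB', τ', hτ', v', rfl⟩ -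
      refine ⟨B ∩ B', hB.inter hB', τ ∪ τ', ?_,
        fun ρ => (if ρ ∈ τ then v ρ else univ) ∩ (if ρ ∈ τ' then v' ρ else univ), ?_⟩
      · intro ρ hρ
        simp only [Finset.coe_union, Set.mem_union] at hρ
        rcases hρ with h | h
        exacts [hτ h, hτ' h]
      · ext ω
        simp only [Set.mem_inter_iff, Set.mem_iInter, Set.mem_preimage, Finset.mem_union]
        constructor
        · rintro ⟨⟨hB1, h1⟩, hB2, h2⟩
          refine ⟨⟨hB1, hB2⟩, fun ρ hρ => ⟨?_, ?_⟩⟩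
          · split_ifs with h
            · exact h1 ρ h
            · exact Set.mem_univ _
          · split_ifs with h
            · exact h2 ρ h
            · exact Set.mem_univ _
        · rintro ⟨⟨hB1, hB2⟩, h⟩
          refine ⟨⟨hB1, fun ρ hρ => ?_⟩, hB2, fun ρ hρ => ?_⟩
          · have := (h ρ (Or.inl hρ)).1; rwa [if_pos hρ] at this
          · have := (h ρ (Or.inr hρ)).2; rwa [if_pos hρ] at this
    have hgen : (ℱ t : MeasurableSpace Ω)
        ⊔ (⨆ s ∈ Set.Icc (0:ℝ) t, MeasurableSpace.comap (X s) ⊤)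
        = MeasurableSpace.generateFrom P := by
      apply le_antisymm
      · refine sup_le ?_ ?_
        · intro B hB
          exact measurableSet_generateFrom ⟨B, hB, ∅, by simp, fun _ => univ, by simp⟩
        · refine iSup₂_le fun ρ hρ => ?_
          rintro A ⟨v, -, rfl⟩
          exact measurableSet_generateFrom
            ⟨univ, MeasurableSet.univ, {ρ}, by simpa using hρ, fun _ => v, by simp⟩
      · refine MeasurableSpace.generateFrom_le ?_
        rintro A ⟨B, hB, τ, hτ, v, rfl⟩
        refine MeasurableSet.inter ((le_sup_left : (ℱ t : MeasurableSpace Ω) ≤ _) _ hB) ?_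
        refine Finset.measurableSet_biInter τ (fun ρ hρ => ?_)
        have hle : MeasurableSpace.comap (X ρ) ⊤ ≤ (ℱ t : MeasurableSpace Ω)
            ⊔ (⨆ s ∈ Set.Icc (0:ℝ) t, MeasurableSpace.comap (X s) ⊤) :=
          le_trans (le_iSup₂ (f := fun s (_ : s ∈ Set.Icc (0:ℝ) t) =>
            MeasurableSpace.comap (X s) ⊤) ρ (hτ (Finset.mem_coe.2 hρ))) le_sup_right
        exact hle _ ⟨v ρ, trivial, rfl⟩
    -- set-integral identity on the π-system
    have hbasic : ∀ A ∈ P, ∫ ω in A, (μ[ψ|ℱ t]) ω ∂μ = ∫ ω in A, ψ ω ∂μ := by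
      rintro A ⟨B, hB, τ, hτ, v, rfl⟩
      have hB0 : MeasurableSet[m0] B := (ℱ.le t) B hB
      have hC0 : MeasurableSet[m0] (⋂ ρ ∈ τ, X ρ ⁻¹' v ρ) :=
        Finset.measurableSet_biInter τ (fun ρ _ => (hXm ρ) ((v ρ).toFinite.measurableSet))
      have hind : ∀ (φ : Ω → ℝ) (ω : Ω), (⋂ ρ ∈ τ, X ρ ⁻¹' v ρ).indicator φ ω
          = φ ω * ∏ ρ ∈ τ, DSMC.indS X ρ (v ρ) ω := by
        intro φ ω
        rw [Set.indicator_apply]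
        by_cases hω : ω ∈ ⋂ ρ ∈ τ, X ρ ⁻¹' v ρ
        · rw [if_pos hω]
          simp only [Set.mem_iInter, Set.mem_preimage] at hω
          rw [Finset.prod_eq_one (fun ρ hρ => by simp [DSMC.indS, hω ρ hρ]), mul_one]
        · rw [if_neg hω]
          simp only [Set.mem_iInter, Set.mem_preimage, not_forall] at hω
          obtain ⟨ρ, hρ, hnot⟩ := hω
          rw [Finset.prod_eq_zero hρ (by simp [DSMC.indS, hnot]), mul_zero]
      have hsetint : ∀ (φ : Ω → ℝ),
          ∫ ω in B ∩ ⋂ ρ ∈ τ, X ρ ⁻¹' v ρ, φ ω ∂μ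
            = ∫ ω in B, φ ω * ∏ ρ ∈ τ, DSMC.indS X ρ (v ρ) ω ∂μ := by
        intro φ
        have h1 := setIntegral_indicator (μ := μ) (s := B) (f := φ) hC0
        rw [← h1]
        exact integral_congr_ae (ae_of_all _ (fun ω => hind φ ω))
      have hint2 : Integrable
          (fun ω => (μ[ψ|ℱ t]) ω * ∏ ρ ∈ τ, DSMC.indS X ρ (v ρ) ω) μ := by
        have hcm : (fun ω => (μ[ψ|ℱ t]) ω * ∏ ρ ∈ τ, DSMC.indS X ρ (v ρ) ω)
            = fun ω => (∏ ρ ∈ τ, DSMC.indS X ρ (v ρ) ω) * (μ[ψ|ℱ t]) ω :=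
          funext fun ω => mul_comm _ _
        rw [hcm]
        exact Integrable.bdd_mul (c := 1) integrable_condExp
          (DSMC.integrable_prodIndS hadp τ v).aestronglyMeasurable
          (ae_of_all _ fun ω => by rw [Real.norm_eq_abs]; exact DSMC.abs_prodIndS_le_one τ v ω)
      have hER : μ[fun ω => (μ[ψ|ℱ t]) ω * ∏ ρ ∈ τ, DSMC.indS X ρ (v ρ) ω|ℱ t]
          =ᵐ[μ] fun ω => (μ[(fun ω' => ∏ ρ ∈ τ, DSMC.indS X ρ (v ρ) ω')|ℱ t]) ω
            * (μ[ψ|ℱ t]) ω := by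
        refine (condExp_mul_of_stronglyMeasurable_left (m := (ℱ t : MeasurableSpace Ω))
          stronglyMeasurable_condExp hint2 (DSMC.integrable_prodIndS hadp τ v)).trans ?_
        refine Filter.EventuallyEq.of_eq (funext fun ω => ?_)
        exact mul_comm _ _
      calc ∫ ω in B ∩ ⋂ ρ ∈ τ, X ρ ⁻¹' v ρ, (μ[ψ|ℱ t]) ω ∂μ
          = ∫ ω in B, (μ[ψ|ℱ t]) ω * ∏ ρ ∈ τ, DSMC.indS X ρ (v ρ) ω ∂μ :=
            hsetint _
        _ = ∫ ω in B, (μ[fun ω => (μ[ψ|ℱ t]) ω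
              * ∏ ρ ∈ τ, DSMC.indS X ρ (v ρ) ω|ℱ t]) ω ∂μ :=
            (setIntegral_condExp (ℱ.le t) hint2 hB).symm
        _ = ∫ ω in B, (μ[(fun ω' => ∏ ρ ∈ τ, DSMC.indS X ρ (v ρ) ω')|ℱ t]) ω
              * (μ[ψ|ℱ t]) ω ∂μ :=
            integral_congr_ae (ae_restrict_of_ae hER)
        _ = ∫ ω in B, (μ[fun ω => ψ ω * ∏ ρ ∈ τ, DSMC.indS X ρ (v ρ) ω|ℱ t]) ω ∂μ :=
            (integral_congr_ae (ae_restrict_of_ae (hcondR τ hτ v))).symm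
        _ = ∫ ω in B, ψ ω * ∏ ρ ∈ τ, DSMC.indS X ρ (v ρ) ω ∂μ :=
            setIntegral_condExp (ℱ.le t) (hψPi_int τ v) hB
        _ = ∫ ω in B ∩ ⋂ ρ ∈ τ, X ρ ⁻¹' v ρ, ψ ω ∂μ := (hsetint ψ).symm
    have huniv : ∫ ω, (μ[ψ|ℱ t]) ω ∂μ = ∫ ω, ψ ω ∂μ := integral_condExp (ℱ.le t)
    exact (ae_eq_condExp_of_forall_setIntegral_eq hm2 hψint
      (fun s' _ _ => integrable_condExp.integrableOn)
      (fun s' hs' _ => DSMC.setIntegral_eq_of_piSystem hgen hPiSys hm2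
        integrable_condExp hψint huniv hbasic s' hs')
      (StronglyMeasurable.aestronglyMeasurable
        (stronglyMeasurable_condExp.mono le_sup_left))).symm
end

section
/- Under the setup of the change-of-measure construction, suppose η is a strictly positive 𝔾̂-martingale (𝒢̂_t = ℱ_T ∨ 𝒢_t) with η_0 = 1 such that η_t is ℱ_t ∨ 𝒢_t-measurable for each t, and that 𝔽 is ℚ-immersed in 𝔽∨𝔾. Define dℙ/dℚ = η_T on 𝒢̂_T. Then for every bounded ℱ_T-measurable ψ and t ∈ [0,T]: E_ℙ[ψ | ℱ_t ∨ 𝒢_t] = E_ℚ[ψ | ℱ_t] = E_ℙ[ψ | ℱ_t] ℙ-a.s.; in particular 𝔽 is ℙ-immersed in 𝔽∨𝔾. -/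
open MeasureTheory ProbabilityTheory
open scoped ENNReal NNReal

/-- Change-of-measure preserves immersion: if `η` is a strictly positive `𝔾̂`-martingale
(`𝒢̂_t = ℱ_T ∨ 𝒢_t`) with `η_0 = 1` such that `η_t` is `ℱ_t ∨ 𝒢_t`-measurable for each `t`,
and `𝔽` is `ℚ`-immersed in `𝔽 ∨ 𝔾`, then under `ℙ = η_T ⬝ ℚ`, for every bounded
`ℱ_T`-measurable `ψ` and `t ∈ [0,T]`,
`E_ℙ[ψ | ℱ_t ∨ 𝒢_t] = E_ℚ[ψ | ℱ_t] = E_ℙ[ψ | ℱ_t]` ℙ-a.s.; in particular `𝔽` is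
`ℙ`-immersed in `𝔽 ∨ 𝔾`. -/
theorem immersion_preserved_under_change_of_measure
    {Ω : Type*} {m0 : MeasurableSpace Ω} (μ : Measure Ω) [IsProbabilityMeasure μ]
    (ℱ 𝒢 𝔾h : Filtration ℝ m0) (T : ℝ) (hT : 0 < T)
    (hGh : ∀ t : ℝ, (𝔾h t : MeasurableSpace Ω) = (ℱ T : MeasurableSpace Ω) ⊔ 𝒢 t)
    (η : ℝ → Ω → ℝ)
    (hηpos : ∀ t ω, 0 < η t ω)
    (hη0 : ∀ ω, η 0 ω = 1)
    (hηmart : Martingale η 𝔾h μ)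
    (hηmeas : ∀ t : ℝ, Measurable[(ℱ t : MeasurableSpace Ω) ⊔ 𝒢 t] (η t))
    -- 𝔽 is ℚ-immersed in 𝔽 ∨ 𝔾
    (himm : ∀ ψ : Ω → ℝ, Measurable[ℱ T] ψ → (∃ C, ∀ ω, |ψ ω| ≤ C) →
      ∀ t ∈ Set.Icc (0:ℝ) T,
        μ[ψ | (ℱ t : MeasurableSpace Ω) ⊔ 𝒢 t] =ᵐ[μ] μ[ψ | ℱ t]) :
    ∀ ψ : Ω → ℝ, Measurable[ℱ T] ψ → (∃ C, ∀ ω, |ψ ω| ≤ C) →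
      ∀ t ∈ Set.Icc (0:ℝ) T,
      (condExp ((ℱ t : MeasurableSpace Ω) ⊔ 𝒢 t)
          (μ.withDensity fun ω => ENNReal.ofReal (η T ω)) ψ
        =ᵐ[μ.withDensity fun ω => ENNReal.ofReal (η T ω)] condExp (ℱ t) μ ψ) ∧
      (condExp ((ℱ t : MeasurableSpace Ω) ⊔ 𝒢 t)
          (μ.withDensity fun ω => ENNReal.ofReal (η T ω)) ψ
        =ᵐ[μ.withDensity fun ω => ENNReal.ofReal (η T ω)]
          condExp (ℱ t) (μ.withDensity fun ω => ENNReal.ofReal (η T ω)) ψ) := by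
  intro ψ hψmeas hψbdd t ht
  obtain ⟨C0, hC0⟩ := hψbdd
  set C : ℝ := max C0 0 with hCdef
  have hC : ∀ ω, |ψ ω| ≤ C := fun ω => (hC0 ω).trans (le_max_left _ _)
  have hCnn : 0 ≤ C := le_max_right _ _
  set ρ : Measure Ω := μ.withDensity fun ω => ENNReal.ofReal (η T ω) with hρdef
  have hm : ((ℱ t : MeasurableSpace Ω) ⊔ 𝒢 t) ≤ m0 := sup_le (ℱ.le t) (𝒢.le t)
  have hF : (ℱ t : MeasurableSpace Ω) ≤ m0 := ℱ.le t
  have hFt_le_m : (ℱ t : MeasurableSpace Ω) ≤ (ℱ t : MeasurableSpace Ω) ⊔ 𝒢 t :=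
    le_sup_left
  have hm_Gh : ((ℱ t : MeasurableSpace Ω) ⊔ 𝒢 t) ≤ 𝔾h t := by
    rw [hGh t]; exact sup_le_sup_right (ℱ.mono ht.2) _
  have hGh_le : (𝔾h t : MeasurableSpace Ω) ≤ m0 := 𝔾h.le t
  have hFT_Gh : (ℱ T : MeasurableSpace Ω) ≤ 𝔾h t := by
    rw [hGh t]; exact le_sup_left
  -- measurability facts
  have hψ_m0 : Measurable[m0] ψ := hψmeas.mono (ℱ.le T) le_rfl
  have hψ_Gh : StronglyMeasurable[𝔾h t] ψ :=
    (hψmeas.mono hFT_Gh le_rfl).stronglyMeasurable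
  have hηT_m0 : Measurable[m0] (η T) :=
    (hηmeas T).mono (sup_le (ℱ.le T) (𝒢.le T)) le_rfl
  have hηt_m : StronglyMeasurable[(ℱ t : MeasurableSpace Ω) ⊔ 𝒢 t] (η t) :=
    (hηmeas t).stronglyMeasurable
  -- integrability facts w.r.t. μ
  have hψ_int : Integrable ψ μ :=
    (integrable_const C).mono' hψ_m0.aestronglyMeasurable
      (Filter.Eventually.of_forall fun ω => by
        simpa [Real.norm_eq_abs] using hC ω)
  have hψηT : Integrable (fun ω => ψ ω * η T ω) μ :=
    (hηmart.integrable T).bdd_mul hψ_m0.aestronglyMeasurable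
      (Filter.Eventually.of_forall fun ω => by
        simpa [Real.norm_eq_abs] using hC ω)
  have hψηt : Integrable (fun ω => ψ ω * η t ω) μ :=
    (hηmart.integrable t).bdd_mul hψ_m0.aestronglyMeasurable
      (Filter.Eventually.of_forall fun ω => by
        simpa [Real.norm_eq_abs] using hC ω)
  -- the candidate function
  set g : Ω → ℝ := condExp (ℱ t) μ ψ with hgdef
  have hg_sm : StronglyMeasurable[ℱ t] g := stronglyMeasurable_condExp
  have hg_m0 : StronglyMeasurable[m0] g := hg_sm.mono hF
  have hg_bdd : ∀ᵐ ω ∂μ, |g ω| ≤ C := by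
    have h := ae_bdd_condExp_of_ae_bdd (m := ℱ t) (μ := μ) (f := ψ)
      (R := C.toNNReal)
      (Filter.Eventually.of_forall fun ω => by
        simpa [Real.coe_toNNReal _ hCnn] using hC ω)
    filter_upwards [h] with ω hω
    simpa [Real.coe_toNNReal _ hCnn] using hω
  have hgηT : Integrable (fun ω => g ω * η T ω) μ :=
    (hηmart.integrable T).bdd_mul hg_m0.aestronglyMeasurable
      (by filter_upwards [hg_bdd] with ω hω; simpa [Real.norm_eq_abs] using hω)
  -- Step A: μ[ψ ηT | ℱt ⊔ 𝒢t] = ηt μ[ψ | ℱt ⊔ 𝒢t]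
  have hA1 : μ[(fun ω => ψ ω * η T ω)|(𝔾h t : MeasurableSpace Ω)]
      =ᵐ[μ] fun ω => ψ ω * η t ω := by
    have h1 : μ[(fun ω => ψ ω * η T ω)|(𝔾h t : MeasurableSpace Ω)]
        =ᵐ[μ] fun ω => ψ ω * (μ[η T|(𝔾h t : MeasurableSpace Ω)]) ω :=
      condExp_mul_of_stronglyMeasurable_left hψ_Gh hψηT (hηmart.integrable T)
    have h2 := hηmart.condExp_ae_eq ht.2
    filter_upwards [h1, h2] with ω h1ω h2ω
    rw [h1ω, h2ω]
  have hA : μ[(fun ω => ψ ω * η T ω)|(ℱ t : MeasurableSpace Ω) ⊔ 𝒢 t]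
      =ᵐ[μ] fun ω => η t ω * (μ[ψ|(ℱ t : MeasurableSpace Ω) ⊔ 𝒢 t]) ω := by
    have htower := condExp_condExp_of_le hm_Gh hGh_le
      (f := fun ω => ψ ω * η T ω) (μ := μ)
    have hstep : μ[μ[(fun ω => ψ ω * η T ω)|(𝔾h t : MeasurableSpace Ω)]|
          (ℱ t : MeasurableSpace Ω) ⊔ 𝒢 t]
        =ᵐ[μ] μ[(fun ω => η t ω * ψ ω)|(ℱ t : MeasurableSpace Ω) ⊔ 𝒢 t] :=
      condExp_congr_ae (hA1.trans (Filter.Eventually.of_forall fun ω => mul_comm _ _))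
    have hpull : μ[(fun ω => η t ω * ψ ω)|(ℱ t : MeasurableSpace Ω) ⊔ 𝒢 t]
        =ᵐ[μ] fun ω => η t ω * (μ[ψ|(ℱ t : MeasurableSpace Ω) ⊔ 𝒢 t]) ω :=
      condExp_mul_of_stronglyMeasurable_left hηt_m
        (hψηt.congr (Filter.Eventually.of_forall fun ω => mul_comm _ _)) hψ_int
    exact htower.symm.trans (hstep.trans hpull)
  -- Step B: μ[ηT | ℱt ⊔ 𝒢t] = ηt
  have hB : μ[η T|(ℱ t : MeasurableSpace Ω) ⊔ 𝒢 t] =ᵐ[μ] η t := by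
    have htower := condExp_condExp_of_le hm_Gh hGh_le (f := η T) (μ := μ)
    have hstep : μ[μ[η T|(𝔾h t : MeasurableSpace Ω)]|(ℱ t : MeasurableSpace Ω) ⊔ 𝒢 t]
        =ᵐ[μ] μ[η t|(ℱ t : MeasurableSpace Ω) ⊔ 𝒢 t] :=
      condExp_congr_ae (hηmart.condExp_ae_eq ht.2)
    have heq : μ[η t|(ℱ t : MeasurableSpace Ω) ⊔ 𝒢 t] = η t :=
      condExp_of_stronglyMeasurable hm hηt_m (hηmart.integrable t)
    exact htower.symm.trans (hstep.trans (by rw [heq]))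
  -- Step A': μ[g ηT | ℱt ⊔ 𝒢t] = g ηt
  have hA' : μ[(fun ω => g ω * η T ω)|(ℱ t : MeasurableSpace Ω) ⊔ 𝒢 t]
      =ᵐ[μ] fun ω => g ω * η t ω := by
    have h1 : μ[(fun ω => g ω * η T ω)|(ℱ t : MeasurableSpace Ω) ⊔ 𝒢 t]
        =ᵐ[μ] fun ω => g ω * (μ[η T|(ℱ t : MeasurableSpace Ω) ⊔ 𝒢 t]) ω :=
      condExp_mul_of_stronglyMeasurable_left (hg_sm.mono hFt_le_m) hgηT
        (hηmart.integrable T)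
    filter_upwards [h1, hB] with ω h1ω hBω
    rw [h1ω, hBω]
  -- immersion under μ
  have himm' : μ[ψ|(ℱ t : MeasurableSpace Ω) ⊔ 𝒢 t] =ᵐ[μ] g := himm ψ hψmeas ⟨C0, hC0⟩ t ht
  have hAg : μ[(fun ω => ψ ω * η T ω)|(ℱ t : MeasurableSpace Ω) ⊔ 𝒢 t]
      =ᵐ[μ] fun ω => η t ω * g ω := by
    filter_upwards [hA, himm'] with ω h1 h2
    rw [h1, h2]
  -- set integrals against ρ reduce to μ
  have hρ_int : ∀ (h : Ω → ℝ) (s : Set Ω), MeasurableSet[m0] s →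
      ∫ x in s, h x ∂ρ = ∫ x in s, η T x * h x ∂μ := by
    intro h s hs
    rw [hρdef]
    have hcoe : (fun ω => ENNReal.ofReal (η T ω))
        = fun ω => ((η T ω).toNNReal : ℝ≥0∞) := rfl
    rw [hcoe, setIntegral_withDensity_eq_setIntegral_smul
      (f := fun ω => (η T ω).toNNReal)
      (measurable_real_toNNReal.comp hηT_m0) h hs]
    refine setIntegral_congr_ae hs (Filter.Eventually.of_forall fun x _ => ?_)
    rw [NNReal.smul_def, smul_eq_mul, Real.coe_toNNReal _ (hηpos T x).le]
  -- key integral identity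
  have key : ∀ s : Set Ω, MeasurableSet[(ℱ t : MeasurableSpace Ω) ⊔ 𝒢 t] s →
      ∫ x in s, g x ∂ρ = ∫ x in s, ψ x ∂ρ := by
    intro s hs
    have hs0 : MeasurableSet[m0] s := hm s hs
    have lhs : ∫ x in s, g x ∂ρ = ∫ x in s, g x * η t x ∂μ :=
      calc ∫ x in s, g x ∂ρ = ∫ x in s, η T x * g x ∂μ := hρ_int g s hs0
        _ = ∫ x in s, g x * η T x ∂μ :=
          setIntegral_congr_ae hs0 (Filter.Eventually.of_forall fun x _ => mul_comm _ _)
        _ = ∫ x in s, (μ[(fun ω => g ω * η T ω)|(ℱ t : MeasurableSpace Ω) ⊔ 𝒢 t]) x ∂μ :=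
          (setIntegral_condExp hm hgηT hs).symm
        _ = ∫ x in s, g x * η t x ∂μ :=
          setIntegral_congr_ae hs0 (hA'.mono fun x hx _ => hx)
    have rhs : ∫ x in s, ψ x ∂ρ = ∫ x in s, η t x * g x ∂μ :=
      calc ∫ x in s, ψ x ∂ρ = ∫ x in s, η T x * ψ x ∂μ := hρ_int ψ s hs0
        _ = ∫ x in s, ψ x * η T x ∂μ :=
          setIntegral_congr_ae hs0 (Filter.Eventually.of_forall fun x _ => mul_comm _ _)
        _ = ∫ x in s, (μ[(fun ω => ψ ω * η T ω)|(ℱ t : MeasurableSpace Ω) ⊔ 𝒢 t]) x ∂μ :=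
          (setIntegral_condExp hm hψηT hs).symm
        _ = ∫ x in s, η t x * g x ∂μ :=
          setIntegral_congr_ae hs0 (hAg.mono fun x hx _ => hx)
    rw [lhs, rhs]
    exact setIntegral_congr_ae hs0
      (Filter.Eventually.of_forall fun x _ => mul_comm _ _)
  -- measure-theoretic setup for ρ
  haveI hρfin : IsFiniteMeasure ρ :=
    isFiniteMeasure_withDensity_ofReal (hηmart.integrable T).2
  have hρμ : ρ ≪ μ := withDensity_absolutelyContinuous _ _
  have hψ_int_ρ : Integrable ψ ρ :=
    (integrable_const C).mono' hψ_m0.aestronglyMeasurable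
      (Filter.Eventually.of_forall fun ω => by
        simpa [Real.norm_eq_abs] using hC ω)
  have hg_bdd_ρ : ∀ᵐ ω ∂ρ, |g ω| ≤ C := hg_bdd.filter_mono hρμ.ae_le
  have hg_int_ρ : Integrable g ρ :=
    (integrable_const C).mono' hg_m0.aestronglyMeasurable
      (by filter_upwards [hg_bdd_ρ] with ω hω; simpa [Real.norm_eq_abs] using hω)
  have ha : g =ᵐ[ρ] condExp ((ℱ t : MeasurableSpace Ω) ⊔ 𝒢 t) ρ ψ :=
    ae_eq_condExp_of_forall_setIntegral_eq hm hψ_int_ρ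
      (fun s _ _ => hg_int_ρ.integrableOn)
      (fun s hs _ => key s hs)
      ((hg_sm.mono hFt_le_m).aestronglyMeasurable)
  have hb : g =ᵐ[ρ] condExp (ℱ t) ρ ψ :=
    ae_eq_condExp_of_forall_setIntegral_eq hF hψ_int_ρ
      (fun s _ _ => hg_int_ρ.integrableOn)
      (fun s hs _ => key s (hFt_le_m s hs))
      (hg_sm.aestronglyMeasurable)
  exact ⟨ha.symm, ha.symm.trans hb⟩
end
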